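/- arXiv:1004.3342 — 13 statements merged into one kernel-verified Lean document; each statement's English description precedes it below -/
import Mathlib

section
/- Each of the relations E⁰, E², E⁴ is a convex equivalence relation on the set of nonstandard elements of M. -/
/-- `a` is a nonstandard element: above every natural number cast. -/
def Nonstd {M : Type*} [CommSemiring M] [LinearOrder M] [IsStrictOrderedRing M] (a : M) : Prop :=
  ∀ n : ℕ, (n : M) < a

def E0 {M : Type*} [CommSemiring M] [LinearOrder M] [IsStrictOrderedRing M] (a b : M) : Prop :=
  ∃ n : ℕ, a < b + (n : M) ∧ b < a + (n : M)

def E1 {M : Type*} [CommSemiring M] [LinearOrder M] [IsStrictOrderedRing M] (a b : M) : Prop :=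
  ∃ c : M, (∀ n : ℕ, (n : M) * c < a ∧ (n : M) * c < b) ∧ a < b + c ∧ b < a + c

def E2 {M : Type*} [CommSemiring M] [LinearOrder M] [IsStrictOrderedRing M] (a b : M) : Prop :=
  ∃ n : ℕ, a < (n : M) * b ∧ b < (n : M) * a

def E3 {M : Type*} [CommSemiring M] [LinearOrder M] [IsStrictOrderedRing M] (a b : M) : Prop :=
  ∃ c : M, (∀ n : ℕ, c ^ n < a ∧ c ^ n < b) ∧ a < b * c ∧ b < a * c

def E4 {M : Type*} [CommSemiring M] [LinearOrder M] [IsStrictOrderedRing M] (a b : M) : Prop :=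
  ∃ n : ℕ, a < b ^ n ∧ b < a ^ n

/-- `a E⁵ b`: some order automorphism of `M` maps `a` to `b`. -/
def E5 {M : Type*} [CommSemiring M] [LinearOrder M] [IsStrictOrderedRing M] (a b : M) : Prop :=
  ∃ f : M ≃o M, f a = b

/-- `E` is a convex equivalence relation on the nonstandard elements of `M`. -/
def IsConvexEquiv {M : Type*} [CommSemiring M] [LinearOrder M] [IsStrictOrderedRing M] (E : M → M → Prop) : Prop :=
  (∀ a : M, Nonstd a → E a a) ∧
  (∀ a b : M, Nonstd a → Nonstd b → E a b → E b a) ∧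
  (∀ a b c : M, Nonstd a → Nonstd b → Nonstd c → E a b → E b c → E a c) ∧
  (∀ a b c : M, Nonstd a → Nonstd b → Nonstd c → a ≤ b → b ≤ c → E a c → E a b)

/-- An almost `{<,+}`-isomorphism: an order isomorphism whose additivity error is finite. -/
def IsAlmostAddIso {M₁ M₂ : Type*} [CommSemiring M₁] [LinearOrder M₁] [IsStrictOrderedRing M₁]
    [CommSemiring M₂] [LinearOrder M₂] [IsStrictOrderedRing M₂] (f : M₁ ≃o M₂) : Prop :=
  ∀ a b : M₁, ∃ n : ℕ, f (a + b) < f a + f b + (n : M₂) ∧ f a + f b < f (a + b) + (n : M₂)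

/-- `M` is 2-order-rigid. -/
def OrderRigid2 (M : Type*) [CommSemiring M] [LinearOrder M] [IsStrictOrderedRing M] : Prop :=
  ∀ a b : M, Nonstd a → Nonstd b →
    Nonempty ({x : M // x < a} ≃o {x : M // x < b}) → E2 a b

/-- `M` is 3-order-rigid. -/
def OrderRigid3 (M : Type*) [CommSemiring M] [LinearOrder M] [IsStrictOrderedRing M] : Prop :=
  ∀ a b : M, Nonstd a → Nonstd b →
    Nonempty ({x : M // x < a} ≃o {x : M // x < b}) → E3 a b

/-- `M` is 4-order-rigid. -/
def OrderRigid4 (M : Type*) [CommSemiring M] [LinearOrder M] [IsStrictOrderedRing M] : Prop :=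
  ∀ a b : M, Nonstd a → Nonstd b →
    Nonempty ({x : M // x < a} ≃o {x : M // x < b}) → E4 a b

/-- E⁰, E², E⁴ are convex equivalence relations on the nonstandard elements. -/
theorem E0_E2_E4_convexEquiv {M : Type*} [CommSemiring M] [LinearOrder M] [IsStrictOrderedRing M]
    (h0 : ∀ x : M, 0 ≤ x) :
    IsConvexEquiv (E0 (M := M)) ∧ IsConvexEquiv (E2 (M := M)) ∧
      IsConvexEquiv (E4 (M := M)) := by
  have hgt : ∀ a : M, Nonstd a → (1 : M) < a := fun a ha => by
    have := ha 1; simpa using this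
  have hpos : ∀ a : M, Nonstd a → (0 : M) < a := fun a ha => by
    have := ha 0; simpa using this
  refine ⟨⟨?_, ?_, ?_, ?_⟩, ⟨?_, ?_, ?_, ?_⟩, ⟨?_, ?_, ?_, ?_⟩⟩
  · intro a ha
    exact ⟨1, by simpa using lt_add_of_pos_right a one_pos,
      by simpa using lt_add_of_pos_right a one_pos⟩
  · rintro a b _ _ ⟨n, h1, h2⟩; exact ⟨n, h2, h1⟩
  · rintro a b c _ _ _ ⟨n, h1, h2⟩ ⟨m, h3, h4⟩
    refine ⟨n + m, ?_, ?_⟩ <;> push_cast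
    · calc a < b + n := h1
        _ ≤ (c + m) + n := add_le_add_left h3.le n
        _ = c + ((n : M) + m) := by ring
    · calc c < b + m := h4
        _ ≤ (a + n) + m := add_le_add_left h2.le m
        _ = a + ((n : M) + m) := by ring
  · rintro a b c _ hb _ hab hbc ⟨n, _, h2⟩
    refine ⟨n + 1, ?_, ?_⟩ <;> push_cast
    · calc a ≤ b := hab
        _ < b + ((n : M) + 1) := lt_add_of_pos_right b (by positivity)
    · calc b ≤ c := hbc
        _ < a + n := h2
        _ ≤ a + ((n : M) + 1) := add_le_add_right (le_add_of_nonneg_right zero_le_one) a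
  -- E2
  · intro a ha
    refine ⟨2, ?_, ?_⟩ <;>
    · have : a < a + a := lt_add_of_pos_right a (hpos a ha)
      calc a < a + a := this
        _ = (2 : ℕ) * a := by push_cast; ring
  · rintro a b _ _ ⟨n, h1, h2⟩; exact ⟨n, h2, h1⟩
  · rintro a b c _ _ _ ⟨n, h1, h2⟩ ⟨m, h3, h4⟩
    refine ⟨n * m, ?_, ?_⟩
    · calc a < n * b := h1
        _ ≤ (n : M) * ((m : M) * c) :=
          mul_le_mul_of_nonneg_left h3.le (Nat.cast_nonneg n)
        _ = ((n * m : ℕ) : M) * c := by push_cast; ring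
    · calc c < m * b := h4
        _ ≤ (m : M) * ((n : M) * a) :=
          mul_le_mul_of_nonneg_left h2.le (Nat.cast_nonneg m)
        _ = ((n * m : ℕ) : M) * a := by push_cast; ring
  · rintro a b c _ hb _ hab hbc ⟨n, _, h2⟩
    refine ⟨n + 2, ?_, ?_⟩
    · have h1b : (1 : M) * b < ((n + 2 : ℕ) : M) * b := by
        apply mul_lt_mul_of_pos_right _ (hpos b hb)
        exact Nat.one_lt_cast.mpr (by omega)
      calc a ≤ b := hab
        _ = 1 * b := (one_mul b).symm
        _ < ((n + 2 : ℕ) : M) * b := h1b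
    · calc b ≤ c := hbc
        _ < n * a := h2
        _ ≤ ((n + 2 : ℕ) : M) * a := by
          apply mul_le_mul_of_nonneg_right _ (h0 a)
          exact Nat.cast_le.mpr (by omega)
  -- E4
  · intro a ha
    have h1a := hgt a ha
    refine ⟨2, ?_, ?_⟩ <;>
    · calc a = a ^ 1 := (pow_one a).symm
        _ < a ^ 2 := pow_lt_pow_right₀ h1a one_lt_two
  · rintro a b _ _ ⟨n, h1, h2⟩; exact ⟨n, h2, h1⟩
  · rintro a b c _ hb _ ⟨n, h1, h2⟩ ⟨m, h3, h4⟩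
    refine ⟨m * n, ?_, ?_⟩
    · calc a < b ^ n := h1
        _ ≤ (c ^ m) ^ n := pow_le_pow_left₀ (h0 b) h3.le n
        _ = c ^ (m * n) := (pow_mul c m n).symm
    · calc c < b ^ m := h4
        _ ≤ (a ^ n) ^ m := pow_le_pow_left₀ (h0 b) h2.le m
        _ = a ^ (m * n) := by rw [← pow_mul, Nat.mul_comm]
  · rintro a b c ha hb _ hab hbc ⟨n, _, h2⟩
    refine ⟨n + 2, ?_, ?_⟩
    · calc a ≤ b := hab
        _ = b ^ 1 := (pow_one b).symm
        _ < b ^ (n + 2) := pow_lt_pow_right₀ (hgt b hb) (by omega)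
    · calc b ≤ c := hbc
        _ < a ^ n := h2
        _ ≤ a ^ (n + 2) := pow_le_pow_right₀ (hgt a ha).le (by omega)
end

section
/- Each of the relations E¹ and E³ is a convex equivalence relation on the set of nonstandard elements of M. -/
private lemma nonstd_pos {M : Type*} [CommSemiring M] [LinearOrder M] [IsStrictOrderedRing M] {a : M}
    (ha : Nonstd a) : 0 < a := by simpa using ha 0

/-- E¹ and E³ are convex equivalence relations on the nonstandard elements. -/
theorem E1_E3_convexEquiv {M : Type*} [CommSemiring M] [LinearOrder M] [IsStrictOrderedRing M]
    (h0 : ∀ x : M, 0 ≤ x) :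
    IsConvexEquiv (E1 (M := M)) ∧ IsConvexEquiv (E3 (M := M)) := by
  constructor
  · refine ⟨?_, ?_, ?_, ?_⟩
    · -- refl
      intro a ha
      exact ⟨1, fun n => by constructor <;> simpa using ha n,
        lt_add_of_pos_right a one_pos, lt_add_of_pos_right a one_pos⟩
    · -- symm
      rintro a b _ _ ⟨c, h1, h2, h3⟩
      exact ⟨c, fun n => ⟨(h1 n).2, (h1 n).1⟩, h3, h2⟩
    · -- trans
      rintro a b c _ _ _ ⟨c₁, h1, hab, hba⟩ ⟨c₂, h2, hbc, hcb⟩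
      have key : ∀ n : ℕ, (n : M) * max c₁ c₂ < a ∧ (n : M) * max c₁ c₂ < c := by
        intro n
        rcases le_total c₁ c₂ with h | h
        · rw [max_eq_right h]
          refine ⟨?_, (h2 n).2⟩
          have hstep : (n : M) * c₂ + c₂ < a + c₂ := by
            calc (n : M) * c₂ + c₂ = ((n + 1 : ℕ) : M) * c₂ := by push_cast; ring
            _ < b := (h2 (n + 1)).1
            _ < a + c₁ := hba
            _ ≤ a + c₂ := add_le_add_right h a
          exact lt_of_add_lt_add_right hstep
        · rw [max_eq_left h]
          refine ⟨(h1 n).1, ?_⟩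
          have hstep : (n : M) * c₁ + c₁ < c + c₁ := by
            calc (n : M) * c₁ + c₁ = ((n + 1 : ℕ) : M) * c₁ := by push_cast; ring
            _ < b := (h1 (n + 1)).2
            _ < c + c₂ := hbc
            _ ≤ c + c₁ := add_le_add_right h c
          exact lt_of_add_lt_add_right hstep
      refine ⟨c₁ + c₂, fun n => ?_, ?_, ?_⟩
      · have hle : (n : M) * (c₁ + c₂) ≤ ((2 * n : ℕ) : M) * max c₁ c₂ := by
          have hmm : (n : M) * (c₁ + c₂) ≤ (n : M) * (max c₁ c₂ + max c₁ c₂) :=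
            mul_le_mul_of_nonneg_left
              (add_le_add (le_max_left _ _) (le_max_right _ _)) (Nat.cast_nonneg n)
          calc (n : M) * (c₁ + c₂) ≤ (n : M) * (max c₁ c₂ + max c₁ c₂) := hmm
          _ = ((2 * n : ℕ) : M) * max c₁ c₂ := by push_cast; ring
        exact ⟨lt_of_le_of_lt hle (key (2 * n)).1, lt_of_le_of_lt hle (key (2 * n)).2⟩
      · calc a < b + c₁ := hab
          _ < (c + c₂) + c₁ := add_lt_add_left hbc c₁
          _ = c + (c₁ + c₂) := by ring
      · calc c < b + c₂ := hcb
          _ < (a + c₁) + c₂ := add_lt_add_left hba c₂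
          _ = a + (c₁ + c₂) := by ring
    · -- convex
      rintro a b c _ hb _ hab hbc ⟨e, he, hac, hca⟩
      have he0 : 0 < e := by
        rcases (h0 e).lt_or_eq with h | h
        · exact h
        · exfalso
          rw [← h, add_zero] at hac hca
          exact lt_asymm hac hca
      exact ⟨e, fun n => ⟨(he n).1, lt_of_lt_of_le (he n).1 hab⟩,
        lt_of_le_of_lt hab (lt_add_of_pos_right b he0),
        lt_of_le_of_lt hbc hca⟩
  · refine ⟨?_, ?_, ?_, ?_⟩
    · -- refl
      intro a ha
      have hpos : 0 < a := nonstd_pos ha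
      refine ⟨2, fun n => ?_, ?_, ?_⟩
      · have h2n : ((2 ^ n : ℕ) : M) < a := ha (2 ^ n)
        constructor <;> · push_cast at h2n; exact h2n
      · rw [mul_two]; exact lt_add_of_pos_right a hpos
      · rw [mul_two]; exact lt_add_of_pos_right a hpos
    · -- symm
      rintro a b _ _ ⟨c, h1, h2, h3⟩
      exact ⟨c, fun n => ⟨(h1 n).2, (h1 n).1⟩, h3, h2⟩
    · -- trans
      rintro a b c ha hb hc ⟨c₁, h1, hab, hba⟩ ⟨c₂, h2, hbc, hcb⟩
      have hapos : 0 < a := nonstd_pos ha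
      have hcpos : 0 < c := nonstd_pos hc
      have hc1 : 0 < c₁ := by
        rcases (h0 c₁).lt_or_eq with h | h
        · exact h
        · exfalso; rw [← h, mul_zero] at hab; exact absurd hab (not_lt.mpr (h0 a))
      have hc2 : 0 < c₂ := by
        rcases (h0 c₂).lt_or_eq with h | h
        · exact h
        · exfalso; rw [← h, mul_zero] at hbc; exact absurd hbc (not_lt.mpr (h0 b))
      have key : ∀ n : ℕ, (max c₁ c₂) ^ n < a ∧ (max c₁ c₂) ^ n < c := by
        intro n
        rcases le_total c₁ c₂ with h | h
        · rw [max_eq_right h]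
          refine ⟨?_, (h2 n).2⟩
          have hstep : c₂ ^ n * c₂ < a * c₂ := by
            calc c₂ ^ n * c₂ = c₂ ^ (n + 1) := (pow_succ c₂ n).symm
            _ < b := (h2 (n + 1)).1
            _ < a * c₁ := hba
            _ ≤ a * c₂ := mul_le_mul_of_nonneg_left h (h0 a)
          exact lt_of_mul_lt_mul_right hstep (h0 c₂)
        · rw [max_eq_left h]
          refine ⟨(h1 n).1, ?_⟩
          have hstep : c₁ ^ n * c₁ < c * c₁ := by
            calc c₁ ^ n * c₁ = c₁ ^ (n + 1) := (pow_succ c₁ n).symm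
            _ < b := (h1 (n + 1)).2
            _ < c * c₂ := hbc
            _ ≤ c * c₁ := mul_le_mul_of_nonneg_left h (h0 c)
          exact lt_of_mul_lt_mul_right hstep (h0 c₁)
      refine ⟨c₁ * c₂, fun n => ?_, ?_, ?_⟩
      · have hle : (c₁ * c₂) ^ n ≤ (max c₁ c₂) ^ (2 * n) := by
          have h1 : c₁ * c₂ ≤ max c₁ c₂ * max c₁ c₂ :=
            mul_le_mul (le_max_left _ _) (le_max_right _ _) (h0 c₂)
              (le_trans (h0 c₁) (le_max_left _ _))
          calc (c₁ * c₂) ^ n ≤ (max c₁ c₂ * max c₁ c₂) ^ n :=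
                pow_le_pow_left₀ (h0 _) h1 n
            _ = (max c₁ c₂) ^ (2 * n) := by rw [← sq, ← pow_mul]
        exact ⟨lt_of_le_of_lt hle (key (2 * n)).1, lt_of_le_of_lt hle (key (2 * n)).2⟩
      · calc a < b * c₁ := hab
          _ < (c * c₂) * c₁ := mul_lt_mul_of_pos_right hbc hc1
          _ = c * (c₁ * c₂) := by ring
      · calc c < b * c₂ := hcb
          _ < (a * c₁) * c₂ := mul_lt_mul_of_pos_right hba hc2
          _ = a * (c₁ * c₂) := by ring
    · -- convex
      rintro a b c ha hb hc hab hbc ⟨e, he, hac, hca⟩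
      have hbpos : 0 < b := nonstd_pos hb
      have h1e : 1 < e := by
        by_contra h
        push_neg at h
        have h1 : a < c := lt_of_lt_of_le hac
          (by calc c * e ≤ c * 1 := mul_le_mul_of_nonneg_left h (h0 c)
              _ = c := mul_one c)
        have h2 : c < a := lt_of_lt_of_le hca
          (by calc a * e ≤ a * 1 := mul_le_mul_of_nonneg_left h (h0 a)
              _ = a := mul_one a)
        exact lt_asymm h1 h2
      refine ⟨e, fun n => ⟨(he n).1, lt_of_lt_of_le (he n).1 hab⟩, ?_,
        lt_of_le_of_lt hbc hca⟩
      calc a ≤ b := hab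
        _ = b * 1 := (mul_one b).symm
        _ < b * e := mul_lt_mul_of_pos_left h1e hbpos
end

section
/- If a and b are nonstandard elements of M with a E³ b, then for every c ∈ M one has (∀ n : ℕ, c ^ n < a) if and only if (∀ n : ℕ, c ^ n < b). Moreover, for any nonstandard a, the set I_a = {c ∈ M : ∀ n : ℕ, c ^ n < a} is closed under addition and multiplication and is downward closed (if c' ≤ c and c ∈ I_a then c' ∈ I_a). -/
/-- if `a E³ b` then `a,b` have the same `I`-set `{c : ∀ n, c ^ n < ·}`;
moreover this set is closed under addition and multiplication and is downward closed. -/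
theorem E3_same_powers_below {M : Type*} [CommSemiring M] [LinearOrder M] [IsStrictOrderedRing M]
    (h0 : ∀ x : M, 0 ≤ x) :
    (∀ a b : M, Nonstd a → Nonstd b → E3 a b →
      ∀ c : M, (∀ n : ℕ, c ^ n < a) ↔ (∀ n : ℕ, c ^ n < b)) ∧
    (∀ a : M, Nonstd a →
      (∀ c d : M, (∀ n : ℕ, c ^ n < a) → (∀ n : ℕ, d ^ n < a) →
        ∀ n : ℕ, (c + d) ^ n < a) ∧
      (∀ c d : M, (∀ n : ℕ, c ^ n < a) → (∀ n : ℕ, d ^ n < a) →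
        ∀ n : ℕ, (c * d) ^ n < a) ∧
      (∀ c c' : M, c' ≤ c → (∀ n : ℕ, c ^ n < a) → ∀ n : ℕ, c' ^ n < a)) := by
  have key : ∀ a b e c : M, e < b → a < b * e → (∀ n : ℕ, c ^ n < a) →
      ∀ n : ℕ, c ^ n < b := by
    intro a b e c he1 hab hc n
    by_contra h
    push_neg at h
    have he : e ≤ c ^ n := le_trans he1.le h
    have h2 : b * e ≤ c ^ n * c ^ n := mul_le_mul h he (h0 e) (h0 _)
    have h3 : a < c ^ (2 * n) := by
      rw [two_mul, pow_add]; exact lt_of_lt_of_le hab h2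
    exact absurd (hc (2 * n)) (not_lt.mpr h3.le)
  constructor
  · rintro a b _ _ ⟨e, hpe, hab, hba⟩ c
    constructor
    · exact key a b e c (by simpa using (hpe 1).2) hab
    · exact key b a e c (by simpa using (hpe 1).1) hba
  · intro a ha
    refine ⟨?_, ?_, ?_⟩
    · intro c d hc hd n
      set t : M := max 2 (max c d) with ht
      have ht2 : (2 : M) ≤ t := le_max_left _ _
      have htpow : ∀ k : ℕ, t ^ k < a := by
        intro k
        rcases max_cases (2 : M) (max c d) with ⟨h1, _⟩ | ⟨h1, _⟩
        · rw [ht, h1]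
          calc (2 : M) ^ k = ((2 ^ k : ℕ) : M) := by push_cast; ring
            _ < a := ha _
        · rcases max_cases c d with ⟨h2, _⟩ | ⟨h2, _⟩
          · rw [ht, h1, h2]; exact hc k
          · rw [ht, h1, h2]; exact hd k
      have hcd : c + d ≤ t * t := by
        calc c + d ≤ t + t := add_le_add
              (le_trans (le_max_left c d) (le_max_right _ _))
              (le_trans (le_max_right c d) (le_max_right _ _))
          _ = 2 * t := (two_mul t).symm
          _ ≤ t * t := mul_le_mul_of_nonneg_right ht2 (h0 t)
      calc (c + d) ^ n ≤ (t * t) ^ n := pow_le_pow_left₀ (h0 _) hcd n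
        _ = t ^ (2 * n) := by rw [two_mul, pow_add, mul_pow]
        _ < a := htpow _
    · intro c d hc hd n
      set t : M := max c d with ht
      have htpow : ∀ k : ℕ, t ^ k < a := by
        intro k
        rcases max_cases c d with ⟨h2, _⟩ | ⟨h2, _⟩
        · rw [ht, h2]; exact hc k
        · rw [ht, h2]; exact hd k
      have hcd : c * d ≤ t * t :=
        mul_le_mul (le_max_left c d) (le_max_right c d) (h0 d) (h0 t)
      calc (c * d) ^ n ≤ (t * t) ^ n := pow_le_pow_left₀ (h0 _) hcd n
        _ = t ^ (2 * n) := by rw [two_mul, pow_add, mul_pow]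
        _ < a := htpow _
    · intro c c' hle hc n
      exact lt_of_le_of_lt (pow_le_pow_left₀ (h0 c') hle n) (hc n)
end

section
/- If a and b are nonstandard elements of M and a E² b, then there is an order automorphism f : M ≃o M with f a = b (that is, a E⁵ b); in particular the initial segments {x : x < a} and {x : x < b} are order isomorphic. -/
namespace E2E5Aux

attribute [local instance] Classical.propDecidable

variable {M : Type*} [CommSemiring M] [LinearOrder M] [IsStrictOrderedRing M]

/-- standard-bounded element -/
def SFin (x : M) : Prop := ∃ n : ℕ, x ≤ (n : M)

/-- finite distance -/
def Ecl (x y : M) : Prop := ∃ n : ℕ, x ≤ y + (n : M) ∧ y ≤ x + (n : M)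

lemma ecl_refl (x : M) : Ecl x x := ⟨0, by simp, by simp⟩

lemma Ecl.symm {x y : M} (h : Ecl x y) : Ecl y x := by
  obtain ⟨n, h1, h2⟩ := h; exact ⟨n, h2, h1⟩

lemma Ecl.trans {x y z : M} (h : Ecl x y) (h' : Ecl y z) : Ecl x z := by
  obtain ⟨n, h1, h2⟩ := h; obtain ⟨m, h3, h4⟩ := h'
  refine ⟨m + n, ?_, ?_⟩
  · calc x ≤ y + (n : M) := h1
      _ ≤ (z + (m : M)) + (n : M) := by gcongr
      _ = z + ((m + n : ℕ) : M) := by push_cast; ring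
  · calc z ≤ y + (m : M) := h4
      _ ≤ (x + (n : M)) + (m : M) := by gcongr
      _ = x + ((m + n : ℕ) : M) := by push_cast; ring

lemma sfin_congr {x y : M} (h : Ecl x y) (hx : SFin x) : SFin y := by
  obtain ⟨n, -, h2⟩ := h; obtain ⟨m, hm⟩ := hx
  exact ⟨m + n, by push_cast; calc y ≤ x + (n:M) := h2
    _ ≤ (m:M) + (n:M) := by gcongr⟩

lemma not_sfin_lt {x : M} (h : ¬ SFin x) (n : ℕ) : (n : M) < x :=
  not_le.mp (fun hxn => h ⟨n, hxn⟩)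

lemma nonstd_not_sfin {u : M} (hu : Nonstd u) : ¬ SFin u := by
  rintro ⟨n, hn⟩; exact absurd hn (not_le.2 (hu n))

lemma not_sfin_of_nonstd_le {u x : M} (hu : Nonstd u) (h : u ≤ x) : ¬ SFin x := by
  rintro ⟨n, hn⟩; exact absurd (le_trans h hn) (not_le.2 (hu n))

lemma ecl_cancel {c x y : M} (h : Ecl (c + x) (c + y)) : Ecl x y := by
  obtain ⟨n, h1, h2⟩ := h
  refine ⟨n, ?_, ?_⟩
  · have : c + x ≤ c + (y + (n:M)) := by rw [← add_assoc]; exact h1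
    exact le_of_add_le_add_left this
  · have : c + y ≤ c + (x + (n:M)) := by rw [← add_assoc]; exact h2
    exact le_of_add_le_add_left this

lemma Ecl.double {x y : M} (h : Ecl x y) : Ecl (2 * x) (2 * y) := by
  obtain ⟨n, h1, h2⟩ := h
  refine ⟨2 * n, ?_, ?_⟩
  · calc 2 * x ≤ 2 * (y + (n:M)) := by gcongr
      _ = 2 * y + ((2 * n : ℕ) : M) := by push_cast; ring
  · calc 2 * y ≤ 2 * (x + (n:M)) := by gcongr
      _ = 2 * x + ((2 * n : ℕ) : M) := by push_cast; ring

section Core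

variable (hsub : ∀ a b : M, a ≤ b → ∃ c, b = a + c)

/-- truncated subtraction chosen via choice -/
noncomputable def sb (x y : M) : M :=
  if h : y ≤ x then (hsub y x h).choose else 0

lemma sb_add {x y : M} (h : y ≤ x) : y + sb hsub x y = x := by
  rw [sb, dif_pos h]; exact (hsub y x h).choose_spec.symm

variable (u c : M)

/-- representative of the finite-distance class of `x` -/
noncomputable def rep (x : M) : M :=
  if SFin x then 0 else if Ecl x u then u else Classical.epsilon (fun y => Ecl y x)

/-- representative of the image class -/
noncomputable def rep2 (x : M) : M :=
  if SFin x then 0 else if Ecl x u ∧ Ecl c u then u + c else 2 * rep u x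

lemma rep_ecl (h0 : ∀ x : M, 0 ≤ x) (hu : Nonstd u) (x : M) : Ecl (rep u x) x := by
  rw [rep]
  by_cases h1 : SFin x
  · rw [if_pos h1]
    obtain ⟨n, hn⟩ := h1
    exact ⟨n, le_trans (h0 x) (le_add_of_nonneg_right n.cast_nonneg), by simpa using hn⟩
  · rw [if_neg h1]
    by_cases h2 : Ecl x u
    · rw [if_pos h2]; exact h2.symm
    · rw [if_neg h2]; exact Classical.epsilon_spec (⟨x, ecl_refl x⟩ : ∃ y, Ecl y x)

lemma rep_congr {x y : M} (h : Ecl x y) : rep u x = rep u y := by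
  have hfin : SFin x ↔ SFin y := ⟨sfin_congr h, sfin_congr h.symm⟩
  have hecl : Ecl x u ↔ Ecl y u := ⟨fun hx => h.symm.trans hx, fun hy => h.trans hy⟩
  have heps : (fun z => Ecl z x) = (fun z => Ecl z y) :=
    funext fun z => propext ⟨fun hz => hz.trans h, fun hz => hz.trans h.symm⟩
  rw [rep, rep]
  by_cases h1 : SFin x
  · rw [if_pos h1, if_pos (hfin.mp h1)]
  · rw [if_neg h1, if_neg (fun hy => h1 (hfin.mpr hy))]
    by_cases h2 : Ecl x u
    · rw [if_pos h2, if_pos (hecl.mp h2)]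
    · rw [if_neg h2, if_neg (fun hy => h2 (hecl.mpr hy)), heps]

lemma rep2_congr {x y : M} (h : Ecl x y) : rep2 u c x = rep2 u c y := by
  have hfin : SFin x ↔ SFin y := ⟨sfin_congr h, sfin_congr h.symm⟩
  have hecl : Ecl x u ↔ Ecl y u := ⟨fun hx => h.symm.trans hx, fun hy => h.trans hy⟩
  rw [rep2, rep2, rep_congr u h]
  by_cases h1 : SFin x
  · rw [if_pos h1, if_pos (hfin.mp h1)]
  · rw [if_neg h1, if_neg (fun hy => h1 (hfin.mpr hy))]
    by_cases h2 : Ecl x u ∧ Ecl c u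
    · rw [if_pos h2, if_pos ⟨hecl.mp h2.1, h2.2⟩]
    · rw [if_neg h2, if_neg (fun hy => h2 ⟨hecl.mpr hy.1, hy.2⟩)]

lemma rep_not_sfin (h0 : ∀ x : M, 0 ≤ x) (hu : Nonstd u) {x : M} (hx : ¬ SFin x) :
    ¬ SFin (rep u x) := fun hs => hx (sfin_congr (rep_ecl u h0 hu x) hs)

lemma rep2_big (h0 : ∀ x : M, 0 ≤ x) (hu : Nonstd u) {x : M} (hx : ¬ SFin x) (n : ℕ) :
    (n : M) ≤ rep2 u c x := by
  rw [rep2, if_neg hx]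
  by_cases h2 : Ecl x u ∧ Ecl c u
  · rw [if_pos h2]
    exact le_trans (hu n).le (le_add_of_nonneg_right (h0 c))
  · rw [if_neg h2, two_mul]
    exact le_trans (not_sfin_lt (rep_not_sfin u h0 hu hx) n).le
      (le_add_of_nonneg_right (h0 _))

lemma rep_le (h0 : ∀ x : M, 0 ≤ x) (hu : Nonstd u) (x : M) :
    rep u x ≤ rep2 u c x + x := by
  by_cases h1 : SFin x
  · rw [rep, if_pos h1]; exact h0 _
  · obtain ⟨n, hn1, -⟩ := rep_ecl u h0 hu x
    calc rep u x ≤ x + (n : M) := hn1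
      _ ≤ x + rep2 u c x := by gcongr; exact rep2_big u c h0 hu h1 n
      _ = rep2 u c x + x := add_comm _ _

/-- the main map on the initial chunk -/
noncomputable def lam (x : M) : M := sb hsub (rep2 u c x + x) (rep u x)

lemma lam_add (h0 : ∀ x : M, 0 ≤ x) (hu : Nonstd u) (x : M) :
    rep u x + lam hsub u c x = rep2 u c x + x :=
  sb_add hsub (rep_le u c h0 hu x)

lemma rep2_bounds (hcu : c ≤ u) (x : M) :
    ∃ k : ℕ, rep2 u c x ≤ 2 * rep u x + (k : M) ∧ 2 * rep u x ≤ rep2 u c x + (k : M) := by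
  rw [rep2, rep]
  by_cases h1 : SFin x
  · rw [if_pos h1, if_pos h1]
    exact ⟨0, by simp, by simp⟩
  · rw [if_neg h1, if_neg h1]
    by_cases h2 : Ecl x u ∧ Ecl c u
    · rw [if_pos h2, if_pos h2.1]
      obtain ⟨k, -, hk2⟩ := h2.2
      refine ⟨k, ?_, ?_⟩
      · calc u + c ≤ u + u := by gcongr
          _ = 2 * u := (two_mul u).symm
          _ ≤ 2 * u + (k : M) := le_add_of_nonneg_right (by positivity)
      · calc 2 * u = u + u := two_mul u
          _ ≤ u + (c + (k : M)) := by gcongr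
          _ = (u + c) + (k : M) := by ring
    · rw [if_neg h2]
      by_cases h3 : Ecl x u
      · rw [if_pos h3]; exact ⟨0, by simp, by simp⟩
      · rw [if_neg h3]; exact ⟨0, by simp, by simp⟩

end Core

section Glue

variable (hsub : ∀ a b : M, a ≤ b → ∃ c, b = a + c) (u c : M)

lemma lam_lt_lam (h0 : ∀ x : M, 0 ≤ x) (hu : Nonstd u) (hcu : c ≤ u)
    {x y : M} (hxy : x < y) : lam hsub u c x < lam hsub u c y := by
  by_cases hecl : Ecl x y
  · have h1 : rep u x = rep u y := rep_congr u hecl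
    have h2 : rep2 u c x = rep2 u c y := rep2_congr u c hecl
    have hx' := lam_add hsub u c h0 hu x
    have hy' := lam_add hsub u c h0 hu y
    have hlt : rep u x + lam hsub u c x < rep u x + lam hsub u c y := by
      rw [hx', h1, hy', ← h2]
      exact add_lt_add_right hxy _
    exact lt_of_add_lt_add_left hlt
  · have hstep : ∀ n : ℕ, x + (n : M) < y := by
      intro n
      by_contra hle
      exact hecl ⟨n, le_trans hxy.le (le_add_of_nonneg_right n.cast_nonneg),
        le_of_not_gt hle⟩
    obtain ⟨k, hbx1, hbx2⟩ := rep2_bounds u c hcu x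
    obtain ⟨k', hby1, hby2⟩ := rep2_bounds u c hcu y
    obtain ⟨n1, hrx1, hrx2⟩ := rep_ecl u h0 hu x
    obtain ⟨m, hry1, hry2⟩ := rep_ecl u h0 hu y
    have claim1 : rep u x + ((k + k' : ℕ) : M) < rep u y := by
      have h4 : rep u x + ((k + k' : ℕ) : M) + (m : M) < rep u y + (m : M) := by
        calc rep u x + ((k + k' : ℕ) : M) + (m : M)
            ≤ (x + (n1 : M)) + ((k + k' : ℕ) : M) + (m : M) := by gcongr
          _ = x + ((n1 + (k + k') + m : ℕ) : M) := by push_cast; ring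
          _ < y := hstep _
          _ ≤ rep u y + (m : M) := hry2
      exact lt_of_add_lt_add_right h4
    have main : rep2 u c x + x + rep u y + ((k' : ℕ) : M)
        < rep2 u c y + y + rep u x + ((k' : ℕ) : M) := by
      calc rep2 u c x + x + rep u y + ((k' : ℕ) : M)
          ≤ (2 * rep u x + (k : M)) + x + rep u y + ((k' : ℕ) : M) := by gcongr
        _ = (rep u x + rep u y) + ((rep u x + ((k + k' : ℕ) : M)) + x) := by
              push_cast; ring
        _ < (rep u x + rep u y) + (rep u y + y) := add_lt_add_right (add_lt_add claim1 hxy) _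
        _ = 2 * rep u y + y + rep u x := by ring
        _ ≤ (rep2 u c y + ((k' : ℕ) : M)) + y + rep u x := by gcongr
        _ = rep2 u c y + y + rep u x + ((k' : ℕ) : M) := by ring
    have main2 : rep2 u c x + x + rep u y < rep2 u c y + y + rep u x :=
      lt_of_add_lt_add_right main
    have hx' := lam_add hsub u c h0 hu x
    have hy' := lam_add hsub u c h0 hu y
    have hfin : (rep u x + rep u y) + lam hsub u c x
        < (rep u x + rep u y) + lam hsub u c y := by
      calc (rep u x + rep u y) + lam hsub u c x
          = (rep u x + lam hsub u c x) + rep u y := by ring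
        _ = rep2 u c x + x + rep u y := by rw [hx']
        _ < rep2 u c y + y + rep u x := main2
        _ = (rep u y + lam hsub u c y) + rep u x := by rw [hy']
        _ = (rep u x + rep u y) + lam hsub u c y := by ring
    exact lt_of_add_lt_add_left hfin

lemma lam_sfin (h0 : ∀ x : M, 0 ≤ x) (hu : Nonstd u) {z : M} (hz : SFin z) :
    lam hsub u c z = z := by
  have hid := lam_add hsub u c h0 hu z
  rw [rep, rep2, if_pos hz, if_pos hz] at hid
  simpa using hid

/-- the initial chunk -/
def Tm (x : M) : Prop := ∃ n : ℕ, x ≤ c + (n : M)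

lemma lam_T_bound (h0 : ∀ x : M, 0 ≤ x) (hu : Nonstd u) (hcu : c ≤ u)
    {x : M} (hx : Tm c x) : ∃ k : ℕ, lam hsub u c x ≤ c + c + (k : M) := by
  obtain ⟨kT, hkT⟩ := hx
  obtain ⟨k, hb1, -⟩ := rep2_bounds u c hcu x
  obtain ⟨n1, hr1, -⟩ := rep_ecl u h0 hu x
  have hid := lam_add hsub u c h0 hu x
  have step1 : rep u x + lam hsub u c x ≤ rep u x + ((rep u x + (k : M)) + x) := by
    rw [hid]
    calc rep2 u c x + x ≤ (2 * rep u x + (k : M)) + x := by gcongr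
      _ = rep u x + ((rep u x + (k : M)) + x) := by ring
  have step2 : lam hsub u c x ≤ (rep u x + (k : M)) + x := le_of_add_le_add_left step1
  refine ⟨kT + n1 + k + kT, ?_⟩
  calc lam hsub u c x ≤ (rep u x + (k : M)) + x := step2
    _ ≤ ((x + (n1 : M)) + (k : M)) + x := by gcongr
    _ ≤ (((c + (kT : M)) + (n1 : M)) + (k : M)) + (c + (kT : M)) := by gcongr
    _ = c + c + ((kT + n1 + k + kT : ℕ) : M) := by push_cast; ring

lemma not_Tm_lt {y : M} (hy : ¬ Tm c y) (n : ℕ) : c + (n : M) < y :=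
  not_le.mp (fun hle => hy ⟨n, hle⟩)

/-- the glued map -/
noncomputable def ff (x : M) : M := if Tm c x then lam hsub u c x else x + c

lemma ff_strictMono (h0 : ∀ x : M, 0 ≤ x) (hu : Nonstd u) (hcu : c ≤ u) :
    StrictMono (ff hsub u c) := by
  intro x y hxy
  rw [ff, ff]
  by_cases hx : Tm c x
  · rw [if_pos hx]
    by_cases hy : Tm c y
    · rw [if_pos hy]; exact lam_lt_lam hsub u c h0 hu hcu hxy
    · rw [if_neg hy]
      obtain ⟨K, hK⟩ := lam_T_bound hsub u c h0 hu hcu hx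
      calc lam hsub u c x ≤ c + c + (K : M) := hK
        _ = (c + (K : M)) + c := by ring
        _ < y + c := by gcongr; exact not_Tm_lt c hy K
  · have hy : ¬ Tm c y := fun ⟨n, hn⟩ => hx ⟨n, hxy.le.trans hn⟩
    rw [if_neg hx, if_neg hy]
    exact add_lt_add_left hxy c

lemma ff_apply_u (h0 : ∀ x : M, 0 ≤ x) (hu : Nonstd u) (hcu : c ≤ u) :
    ff hsub u c u = u + c := by
  rw [ff]
  by_cases hT : Tm c u
  · rw [if_pos hT]
    obtain ⟨n, hn⟩ := hT
    have hecl_cu : Ecl c u := ⟨n, le_trans hcu (le_add_of_nonneg_right n.cast_nonneg), hn⟩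
    have hru : rep u u = u := by
      rw [rep, if_neg (nonstd_not_sfin hu), if_pos (ecl_refl u)]
    have hr2u : rep2 u c u = u + c := by
      rw [rep2, if_neg (nonstd_not_sfin hu), if_pos ⟨ecl_refl u, hecl_cu⟩]
    have hid := lam_add hsub u c h0 hu u
    rw [hru, hr2u] at hid
    have : u + lam hsub u c u = u + (c + u) := by rw [hid]; ring
    have h2 := add_left_cancel this
    rw [h2]; exact add_comm c u
  · rw [if_neg hT]

end Glue

section Surj

variable (hsub : ∀ a b : M, a ≤ b → ∃ c, b = a + c) (u c : M)

lemma ff_surjective (h0 : ∀ x : M, 0 ≤ x)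
    (hdiv : ∀ (a : M) (n : ℕ), n ≠ 0 → ∃ q r : M, a = (n : M) * q + r ∧ r < (n : M))
    (hu : Nonstd u) (hcu : c ≤ u) :
    Function.Surjective (ff hsub u c) := by
  intro z
  by_cases hz' : ∃ n : ℕ, z ≤ c + c + (n : M)
  · by_cases hzf : SFin z
    · refine ⟨z, ?_⟩
      obtain ⟨n, hn⟩ := hzf
      have hT : Tm c z := ⟨n, le_trans hn (le_add_of_nonneg_left (h0 c))⟩
      rw [ff, if_pos hT]
      exact lam_sfin hsub u c h0 hu ⟨n, hn⟩
    · obtain ⟨q, r, hzqr, hr2⟩ := hdiv z 2 (by norm_num)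
      have hc2 : ((2 : ℕ) : M) = 2 := by norm_num
      rw [hc2] at hzqr hr2
      have hqz : 2 * q ≤ z := by rw [hzqr]; exact le_add_of_nonneg_right (h0 r)
      have hz2q : z ≤ 2 * q + 2 := by rw [hzqr]; gcongr
      have hqf : ¬ SFin q := by
        rintro ⟨n, hn⟩
        refine hzf ⟨2 * n + 2, ?_⟩
        calc z ≤ 2 * q + 2 := hz2q
          _ ≤ 2 * (n : M) + 2 := by gcongr
          _ = ((2 * n + 2 : ℕ) : M) := by push_cast; ring
      have heclz2q : Ecl z (2 * q) := by
        refine ⟨2, ?_, ?_⟩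
        · calc z ≤ 2 * q + 2 := hz2q
            _ = 2 * q + ((2 : ℕ) : M) := by norm_num
        · exact le_trans hqz (le_add_of_nonneg_right (by positivity))
      by_cases hpin : Ecl q u ∧ Ecl c u
      · -- pinned class: z is finitely close to u + c
        have hecl2u : Ecl (2 * q) (2 * u) := hpin.1.double
        have heclb : Ecl (2 * u) (u + c) := by
          obtain ⟨k, -, hk2⟩ := hpin.2
          refine ⟨k, ?_, ?_⟩
          · calc 2 * u = u + u := two_mul u
              _ ≤ u + (c + (k : M)) := by gcongr
              _ = (u + c) + (k : M) := by ring
          · calc u + c ≤ u + u := by gcongr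
              _ = 2 * u := (two_mul u).symm
              _ ≤ 2 * u + (k : M) := le_add_of_nonneg_right (by positivity)
        have heclzb : Ecl z (u + c) := (heclz2q.trans hecl2u).trans heclb
        have hcz : c ≤ z := by
          obtain ⟨n, -, h2⟩ := heclzb
          have hstep : c + (n : M) ≤ z + (n : M) := by
            calc c + (n : M) ≤ c + u := by gcongr; exact (hu n).le
              _ = u + c := add_comm c u
              _ ≤ z + (n : M) := h2
          exact le_of_add_le_add_right hstep
        have hle : u + c ≤ u + z := by gcongr
        have hx : (u + c) + sb hsub (u + z) (u + c) = u + z := sb_add hsub hle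
        set x := sb hsub (u + z) (u + c) with hxdef
        have hcx : c + x = z := by
          have h5 : u + (c + x) = u + z := by rw [← add_assoc]; exact hx
          exact add_left_cancel h5
        have heclxu : Ecl x u := by
          apply ecl_cancel (c := c)
          rw [hcx, add_comm c u]
          exact heclzb
        have hxf : ¬ SFin x := fun hs => nonstd_not_sfin hu (sfin_congr heclxu hs)
        have hTx : Tm c x := by
          obtain ⟨k1, -, hk12⟩ := hpin.2
          obtain ⟨k2, hxk, -⟩ := heclxu
          refine ⟨k1 + k2, ?_⟩
          calc x ≤ u + (k2 : M) := hxk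
            _ ≤ (c + (k1 : M)) + (k2 : M) := by gcongr
            _ = c + ((k1 + k2 : ℕ) : M) := by push_cast; ring
        refine ⟨x, ?_⟩
        rw [ff, if_pos hTx]
        have hrx : rep u x = u := by rw [rep, if_neg hxf, if_pos heclxu]
        have hr2x : rep2 u c x = u + c := by rw [rep2, if_neg hxf, if_pos ⟨heclxu, hpin.2⟩]
        have hid := lam_add hsub u c h0 hu x
        rw [hrx, hr2x, hx] at hid
        exact add_left_cancel hid
      · -- generic class: divide by two
        obtain ⟨n1, hq1, hq2⟩ := rep_ecl u h0 hu q
        have hwz : rep u q ≤ z := by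
          calc rep u q ≤ q + (n1 : M) := hq1
            _ ≤ q + q := by gcongr; exact (not_sfin_lt hqf n1).le
            _ = 2 * q := (two_mul q).symm
            _ ≤ z := hqz
        have h2w : 2 * rep u q ≤ rep u q + z := by
          rw [two_mul]; exact add_le_add_right hwz _
        have hx : 2 * rep u q + sb hsub (rep u q + z) (2 * rep u q) = rep u q + z :=
          sb_add hsub h2w
        set x := sb hsub (rep u q + z) (2 * rep u q) with hxdef
        have hwx : rep u q + x = z := by
          have h5 : rep u q + (rep u q + x) = rep u q + z := by
            rw [← add_assoc, ← two_mul]; exact hx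
          exact add_left_cancel h5
        have heclxq : Ecl x q := by
          refine ⟨n1 + 2, ?_, ?_⟩
          · have h6 : rep u q + x ≤ rep u q + (q + ((n1 + 2 : ℕ) : M)) := by
              rw [hwx]
              calc z ≤ 2 * q + 2 := hz2q
                _ = q + (q + 2) := by ring
                _ ≤ (rep u q + (n1 : M)) + (q + 2) := by gcongr
                _ = rep u q + (q + ((n1 : M) + 2)) := by ring
                _ = rep u q + (q + ((n1 + 2 : ℕ) : M)) := by push_cast; ring
            exact le_of_add_le_add_left h6
          · have h7 : rep u q + (q + q) ≤ rep u q + ((q + (n1 : M)) + x) := by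
              calc rep u q + (q + q) = rep u q + 2 * q := by rw [two_mul]
                _ ≤ rep u q + z := by gcongr
                _ = rep u q + (rep u q + x) := by rw [hwx]
                _ ≤ rep u q + ((q + (n1 : M)) + x) := by gcongr
            have h9 : q + q ≤ q + ((n1 : M) + x) := by
              calc q + q ≤ (q + (n1 : M)) + x := le_of_add_le_add_left h7
                _ = q + ((n1 : M) + x) := by ring
            calc q ≤ (n1 : M) + x := le_of_add_le_add_left h9
              _ = x + (n1 : M) := add_comm _ _
              _ ≤ x + ((n1 + 2 : ℕ) : M) := by gcongr; exact_mod_cast Nat.le_add_right n1 2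
        have hTq : Tm c q := by
          obtain ⟨nz, hnz⟩ := hz'
          have h11 : 2 * q ≤ 2 * (c + (nz : M)) := by
            calc 2 * q ≤ z := hqz
              _ ≤ c + c + (nz : M) := hnz
              _ ≤ (c + (nz : M)) + (c + (nz : M)) := by
                  have : (0:M) ≤ (nz : M) := by positivity
                  calc c + c + (nz : M) = c + (c + (nz : M)) := by ring
                    _ ≤ (c + (nz : M)) + (c + (nz : M)) := by gcongr; exact le_add_of_nonneg_right this
              _ = 2 * (c + (nz : M)) := (two_mul _).symm
          exact ⟨nz, le_of_mul_le_mul_left h11 two_pos⟩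
        have hTx : Tm c x := by
          obtain ⟨nq, hnq⟩ := hTq
          obtain ⟨mm, hm1, -⟩ := heclxq
          refine ⟨nq + mm, ?_⟩
          calc x ≤ q + (mm : M) := hm1
            _ ≤ (c + (nq : M)) + (mm : M) := by gcongr
            _ = c + ((nq + mm : ℕ) : M) := by push_cast; ring
        refine ⟨x, ?_⟩
        rw [ff, if_pos hTx]
        have hrx : rep u x = rep u q := rep_congr u heclxq
        have hr2x : rep2 u c x = 2 * rep u q := by
          rw [rep2_congr u c heclxq, rep2, if_neg hqf, if_neg hpin]
        have hid := lam_add hsub u c h0 hu x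
        rw [hrx, hr2x, hx] at hid
        exact add_left_cancel hid
  · -- outside the chunk: translate down by c
    have hcz : c ≤ z := by
      have h1 : c + c + ((0 : ℕ) : M) < z := not_le.mp (fun hle => hz' ⟨0, hle⟩)
      have h2 : c ≤ c + c + ((0 : ℕ) : M) := by
        simp only [Nat.cast_zero, add_zero]
        exact le_add_of_nonneg_right (h0 c)
      exact le_trans h2 h1.le
    have hx : c + sb hsub z c = z := sb_add hsub hcz
    set x := sb hsub z c with hxdef
    have hxT : ¬ Tm c x := by
      rintro ⟨n, hn⟩
      refine hz' ⟨n, ?_⟩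
      calc z = c + x := hx.symm
        _ ≤ c + (c + (n : M)) := by gcongr
        _ = c + c + (n : M) := by ring
    refine ⟨x, ?_⟩
    rw [ff, if_neg hxT, add_comm x c]
    exact hx

end Surj

section Assemble

lemma one_step (h0 : ∀ x : M, 0 ≤ x)
    (hsub : ∀ a b : M, a ≤ b → ∃ c, b = a + c)
    (hdiv : ∀ (a : M) (n : ℕ), n ≠ 0 → ∃ q r : M, a = (n : M) * q + r ∧ r < (n : M))
    {u v : M} (hu : Nonstd u) (huv : u ≤ v) (hv : v ≤ u + u) :
    ∃ f : M ≃o M, f u = v := by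
  obtain ⟨c, hc⟩ := hsub u v huv
  have hcu : c ≤ u := by
    have h1 : u + c ≤ u + u := by rw [← hc]; exact hv
    exact le_of_add_le_add_left h1
  refine ⟨StrictMono.orderIsoOfSurjective (ff hsub u c)
      (ff_strictMono hsub u c h0 hu hcu)
      (ff_surjective hsub u c h0 hdiv hu hcu), ?_⟩
  show ff hsub u c u = v
  rw [ff_apply_u hsub u c h0 hu hcu, hc]

lemma chain (h0 : ∀ x : M, 0 ≤ x)
    (hsub : ∀ a b : M, a ≤ b → ∃ c, b = a + c)
    (hdiv : ∀ (a : M) (n : ℕ), n ≠ 0 → ∃ q r : M, a = (n : M) * q + r ∧ r < (n : M)) :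
    ∀ (K : ℕ) (u v : M), Nonstd u → u ≤ v → v ≤ 2 ^ K * u →
      ∃ f : M ≃o M, f u = v := by
  intro K
  induction K with
  | zero =>
      intro u v hu huv hv
      have hv' : v = u := le_antisymm (by simpa using hv) huv
      exact ⟨OrderIso.refl M, by rw [OrderIso.refl_apply, hv']⟩
  | succ K ih =>
      intro u v hu huv hv
      by_cases h2 : v ≤ u + u
      · exact one_step h0 hsub hdiv hu huv h2
      · have h2' : u + u ≤ v := (not_le.mp h2).le
        obtain ⟨f1, hf1⟩ := one_step h0 hsub hdiv hu
          (le_add_of_nonneg_right (h0 u)) le_rfl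
        have huu : Nonstd (u + u) := fun n =>
          lt_of_lt_of_le (hu n) (le_add_of_nonneg_right (h0 u))
        have hv' : v ≤ 2 ^ K * (u + u) := by
          calc v ≤ 2 ^ (K + 1) * u := hv
            _ = 2 ^ K * (u + u) := by rw [pow_succ, mul_assoc, two_mul]
        obtain ⟨f2, hf2⟩ := ih (u + u) v huu h2' hv'
        exact ⟨f1.trans f2, by rw [OrderIso.trans_apply, hf1, hf2]⟩

lemma natCast_le_two_pow (n : ℕ) : (n : M) ≤ 2 ^ n := by
  calc (n : M) ≤ ((2 ^ n : ℕ) : M) := Nat.cast_le.mpr (Nat.lt_two_pow_self (n := n)).le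
    _ = 2 ^ n := by push_cast; ring

lemma e5_of_le (h0 : ∀ x : M, 0 ≤ x)
    (hsub : ∀ a b : M, a ≤ b → ∃ c, b = a + c)
    (hdiv : ∀ (a : M) (n : ℕ), n ≠ 0 → ∃ q r : M, a = (n : M) * q + r ∧ r < (n : M))
    {a b : M} (ha : Nonstd a) (hle : a ≤ b) {n : ℕ} (hn : b < (n : M) * a) :
    ∃ f : M ≃o M, f a = b := by
  apply chain h0 hsub hdiv n a b ha hle
  calc b ≤ (n : M) * a := hn.le
    _ ≤ 2 ^ n * a := mul_le_mul_of_nonneg_right (natCast_le_two_pow n) (h0 a)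

/-- restrict an order automorphism with `f a = b` to initial segments -/
def segIso (f : M ≃o M) {a b : M} (hf : f a = b) :
    {x : M // x < a} ≃o {x : M // x < b} where
  toFun := fun x => ⟨f x, by rw [← hf]; exact f.lt_iff_lt.mpr x.2⟩
  invFun := fun y => ⟨f.symm y, f.lt_iff_lt.mp
    (by rw [f.apply_symm_apply, hf]; exact y.2)⟩
  left_inv := fun x => Subtype.ext (f.symm_apply_apply x)
  right_inv := fun y => Subtype.ext (f.apply_symm_apply y)
  map_rel_iff' := by
    intro x y
    simp only [Equiv.coe_fn_mk, Subtype.mk_le_mk]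
    exact f.le_iff_le

end Assemble

end E2E5Aux

/-- `a E² b` implies `a E⁵ b`, and in particular the initial segments
below `a` and below `b` are order isomorphic. -/
theorem E2_implies_E5 {M : Type*} [CommSemiring M] [LinearOrder M] [IsStrictOrderedRing M]
    (h0 : ∀ x : M, 0 ≤ x)
    (hsub : ∀ a b : M, a ≤ b → ∃ c, b = a + c)
    (hdiv : ∀ (a : M) (n : ℕ), n ≠ 0 → ∃ q r : M, a = (n : M) * q + r ∧ r < (n : M))
    (a b : M) (ha : Nonstd a) (hb : Nonstd b) (hab : E2 a b) :
    (∃ f : M ≃o M, f a = b) ∧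
      Nonempty ({x : M // x < a} ≃o {x : M // x < b}) := by
  obtain ⟨n, h1, h2⟩ := hab
  have main : ∃ f : M ≃o M, f a = b := by
    rcases le_total a b with hle | hle
    · exact E2E5Aux.e5_of_le h0 hsub hdiv ha hle h2
    · obtain ⟨f, hf⟩ := E2E5Aux.e5_of_le h0 hsub hdiv hb hle h1
      exact ⟨f.symm, (OrderIso.symm_apply_eq f).mpr hf.symm⟩
  obtain ⟨f, hf⟩ := main
  exact ⟨⟨f, hf⟩, ⟨E2E5Aux.segIso f hf⟩⟩
end

section
/- For nonstandard elements a, b of M, there is an order isomorphism between the initial segments {x : x < a} and {x : x < b} if and only if there is an order automorphism f : M ≃o M with f a = b (that is, iff a E⁵ b). -/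
/-- the initial segments below nonstandard `a` and `b` are order isomorphic
iff some order automorphism of `M` maps `a` to `b`. -/
theorem initSeg_iso_iff_E5 {M : Type*} [CommSemiring M] [LinearOrder M] [IsStrictOrderedRing M]
    (h0 : ∀ x : M, 0 ≤ x)
    (hsub : ∀ a b : M, a ≤ b → ∃ c, b = a + c)
    (a b : M) (ha : Nonstd a) (hb : Nonstd b) :
    Nonempty ({x : M // x < a} ≃o {x : M // x < b}) ↔ ∃ f : M ≃o M, f a = b := by
  constructor
  · rintro ⟨g⟩
    classical
    set c : ∀ x : M, ¬ x < a → M := fun x h => Classical.choose (hsub a x (not_lt.mp h))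
      with hcdef
    have hc : ∀ (x : M) (h : ¬ x < a), x = a + c x h :=
      fun x h => Classical.choose_spec (hsub a x (not_lt.mp h))
    set f : M → M := fun x => if h : x < a then (g ⟨x, h⟩ : M) else b + c x h with hfdef
    have hmono : StrictMono f := by
      intro x y hxy
      by_cases hx : x < a <;> by_cases hy : y < a
      · simp only [f, dif_pos hx, dif_pos hy]
        exact Subtype.coe_lt_coe.mpr (g.lt_iff_lt.mpr (Subtype.mk_lt_mk.mpr hxy))
      · simp only [f, dif_pos hx, dif_neg hy]
        exact lt_of_lt_of_le (g ⟨x, hx⟩).2 (le_add_of_nonneg_right (h0 _))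
      · exact absurd (hxy.trans hy) hx
      · simp only [f, dif_neg hx, dif_neg hy]
        have h1 : a + c x hx < a + c y hy := by rw [← hc x hx, ← hc y hy]; exact hxy
        exact add_lt_add_right (lt_of_add_lt_add_left h1) b
    have hsurj : Function.Surjective f := by
      intro z
      by_cases hz : z < b
      · refine ⟨(g.symm ⟨z, hz⟩ : M), ?_⟩
        have hlt : ((g.symm ⟨z, hz⟩ : M)) < a := (g.symm ⟨z, hz⟩).2
        simp only [f, dif_pos hlt]
        have heq : (⟨(g.symm ⟨z, hz⟩ : M), hlt⟩ : {x : M // x < a}) = g.symm ⟨z, hz⟩ :=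
          Subtype.ext rfl
        rw [heq, g.apply_symm_apply]
      · obtain ⟨d, hd⟩ := hsub b z (not_lt.mp hz)
        refine ⟨a + d, ?_⟩
        have hna : ¬ a + d < a := not_lt.mpr (le_add_of_nonneg_right (h0 d))
        simp only [f, dif_neg hna]
        have hcd : d = c (a + d) hna := add_left_cancel (hc (a + d) hna)
        rw [← hcd, ← hd]
    have hfa : f a = b := by
      have hna : ¬ a < a := lt_irrefl a
      simp only [f, dif_neg hna]
      have h1 : a + 0 = a + c a hna := by rw [add_zero]; exact hc a hna
      rw [← add_left_cancel h1, add_zero]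
    exact ⟨hmono.orderIsoOfSurjective f hsurj,
      by rw [StrictMono.coe_orderIsoOfSurjective]; exact hfa⟩
  · rintro ⟨f, hf⟩
    have key : ∀ x : M, x < a ↔ f x < b := by
      intro x; rw [← hf]; exact f.lt_iff_lt.symm
    refine ⟨⟨⟨fun x => ⟨f x, (key x).mp x.2⟩,
      fun y => ⟨f.symm y, ?_⟩, fun x => ?_, fun y => ?_⟩, ?_⟩⟩
    · rw [key, f.apply_symm_apply]; exact y.2
    · exact Subtype.ext (f.symm_apply_apply x)
    · exact Subtype.ext (f.apply_symm_apply y)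
    · intro x y
      exact ⟨fun h => f.le_iff_le.mp h, fun h => f.le_iff_le.mpr h⟩
end

section
/- Define the relation E' on the nonstandard elements of M by: a E' b iff there is an order automorphism f : M ≃o M with max a b ≤ f (min a b). Then E' is a convex equivalence relation on the nonstandard elements of M, E⁵ is contained in E', and E' is contained in every convex equivalence relation on the nonstandard elements of M that contains E⁵ (so E' is the smallest convex equivalence relation containing E⁵). -/
/-- The relation `E'`: some order automorphism moves `min a b` above `max a b`. -/
def Eprime {M : Type*} [CommSemiring M] [LinearOrder M] [IsStrictOrderedRing M] (a b : M) : Prop :=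
  ∃ f : M ≃o M, max a b ≤ f (min a b)

lemma Eprime.symm' {M : Type*} [CommSemiring M] [LinearOrder M] [IsStrictOrderedRing M] {a b : M}
    (h : Eprime a b) : Eprime b a := by
  obtain ⟨f, hf⟩ := h
  exact ⟨f, by rwa [max_comm, min_comm]⟩

lemma Eprime.trans_aux {M : Type*} [CommSemiring M] [LinearOrder M] [IsStrictOrderedRing M] {a b c : M}
    (hac : a ≤ c) (h1 : Eprime a b) (h2 : Eprime b c) : Eprime a c := by
  obtain ⟨f, hf⟩ := h1
  obtain ⟨g, hg⟩ := h2
  rcases le_total b a with hba | hab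
  · -- b ≤ a ≤ c
    refine ⟨g, ?_⟩
    rw [max_eq_right hac, min_eq_left hac]
    rw [max_eq_right (hba.trans hac), min_eq_left (hba.trans hac)] at hg
    exact hg.trans (g.monotone hba)
  · rcases le_total b c with hbc | hcb
    · -- a ≤ b ≤ c
      rw [max_eq_right hab, min_eq_left hab] at hf
      rw [max_eq_right hbc, min_eq_left hbc] at hg
      refine ⟨f.trans g, ?_⟩
      rw [max_eq_right hac, min_eq_left hac]
      exact hg.trans (g.monotone hf)
    · -- a ≤ c ≤ b
      rw [max_eq_right hab, min_eq_left hab] at hf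
      refine ⟨f, ?_⟩
      rw [max_eq_right hac, min_eq_left hac]
      exact hcb.trans hf

lemma Eprime.trans' {M : Type*} [CommSemiring M] [LinearOrder M] [IsStrictOrderedRing M] {a b c : M}
    (h1 : Eprime a b) (h2 : Eprime b c) : Eprime a c := by
  rcases le_total a c with hac | hca
  · exact Eprime.trans_aux hac h1 h2
  · exact (Eprime.trans_aux hca h2.symm' h1.symm').symm'

/-- `E'` is the smallest convex equivalence relation on the nonstandard
elements containing `E⁵`. -/
theorem Eprime_smallest_convex_containing_E5 {M : Type*} [CommSemiring M] [LinearOrder M] [IsStrictOrderedRing M]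
    (h0 : ∀ x : M, 0 ≤ x) :
    IsConvexEquiv (Eprime (M := M)) ∧
    (∀ a b : M, Nonstd a → Nonstd b → E5 a b → Eprime a b) ∧
    (∀ E : M → M → Prop, IsConvexEquiv E →
      (∀ a b : M, Nonstd a → Nonstd b → E5 a b → E a b) →
      ∀ a b : M, Nonstd a → Nonstd b → Eprime a b → E a b) := by
  refine ⟨⟨fun a _ => ⟨OrderIso.refl M, by simp⟩,
      fun a b _ _ h => h.symm',
      fun a b c _ _ _ h1 h2 => h1.trans' h2,
      fun a b c _ _ _ hab hbc ⟨f, hf⟩ => ?_⟩, ?_, ?_⟩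
  · -- convexity
    rw [max_eq_right (hab.trans hbc), min_eq_left (hab.trans hbc)] at hf
    exact ⟨f, by rw [max_eq_right hab, min_eq_left hab]; exact hbc.trans hf⟩
  · -- E5 ⊆ E'
    rintro a b _ _ ⟨f, rfl⟩
    rcases le_total a (f a) with h | h
    · exact ⟨f, by rw [max_eq_right h, min_eq_left h]⟩
    · exact ⟨f.symm, by rw [max_eq_left h, min_eq_right h]; simp⟩
  · -- minimality
    rintro E ⟨_, hsymm, _, hconv⟩ hE5 a b ha hb ⟨f, hf⟩
    rcases le_total a b with h | h
    · rw [max_eq_right h, min_eq_left h] at hf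
      have hfa : Nonstd (f a) := fun n => (hb n).trans_le hf
      exact hconv a b (f a) ha hb hfa h hf (hE5 a (f a) ha hfa ⟨f, rfl⟩)
    · rw [max_eq_left h, min_eq_right h] at hf
      have hfb : Nonstd (f b) := fun n => (ha n).trans_le hf
      exact hsymm _ _ hb ha (hconv b a (f b) hb ha hfb h hf (hE5 b (f b) hb hfb ⟨f, rfl⟩))
end

section
/- Let f : M₁ ≃o M₂ be an order isomorphism. Then for all nonstandard a, b ∈ M₁: a E⁰ b in M₁ if and only if f a E⁰ f b in M₂ (in particular f maps nonstandard elements to nonstandard elements). -/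
private lemma succ_le_of_lt' {M : Type*} [CommSemiring M] [LinearOrder M] [IsStrictOrderedRing M]
    (hd : ∀ a x : M, ¬(a < x ∧ x < a + 1)) {a x : M} (h : a < x) : a + 1 ≤ x := by
  by_contra hc
  exact hd a x ⟨h, lt_of_not_ge hc⟩

private lemma orderIso_add_one {M₁ M₂ : Type*}
    [CommSemiring M₁] [LinearOrder M₁] [IsStrictOrderedRing M₁] [CommSemiring M₂] [LinearOrder M₂] [IsStrictOrderedRing M₂]
    (hd₂ : ∀ a x : M₂, ¬(a < x ∧ x < a + 1))
    (hd₁ : ∀ a x : M₁, ¬(a < x ∧ x < a + 1))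
    (f : M₁ ≃o M₂) (x : M₁) : f (x + 1) = f x + 1 := by
  have h1 : f x < f (x + 1) := f.lt_iff_lt.mpr (lt_add_of_pos_right x one_pos)
  have h2 : f x + 1 ≤ f (x + 1) := succ_le_of_lt' hd₂ h1
  have h3 : x < f.symm (f x + 1) := by
    have : f x < f x + 1 := lt_add_of_pos_right _ one_pos
    have := f.symm.lt_iff_lt.mpr this
    simpa using this
  have h4 : x + 1 ≤ f.symm (f x + 1) := succ_le_of_lt' hd₁ h3
  have h5 : f (x + 1) ≤ f x + 1 := by
    have := f.le_iff_le.mpr h4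
    simpa using this
  exact le_antisymm h5 h2

private lemma orderIso_nat {M₁ M₂ : Type*}
    [CommSemiring M₁] [LinearOrder M₁] [IsStrictOrderedRing M₁] [CommSemiring M₂] [LinearOrder M₂] [IsStrictOrderedRing M₂]
    (h0₁ : ∀ x : M₁, 0 ≤ x) (h0₂ : ∀ x : M₂, 0 ≤ x)
    (hd₁ : ∀ a x : M₁, ¬(a < x ∧ x < a + 1)) (hd₂ : ∀ a x : M₂, ¬(a < x ∧ x < a + 1))
    (f : M₁ ≃o M₂) (n : ℕ) : f (n : M₁) = (n : M₂) := by
  induction n with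
  | zero =>
    simp only [Nat.cast_zero]
    have h1 : 0 ≤ f 0 := h0₂ _
    have h2 : f 0 ≤ 0 := by
      have := f.le_iff_le.mpr (h0₁ (f.symm 0))
      simpa using this
    exact le_antisymm h2 h1
  | succ n ih =>
    push_cast
    rw [orderIso_add_one hd₂ hd₁ f, ih]

private lemma orderIso_nat_add {M₁ M₂ : Type*}
    [CommSemiring M₁] [LinearOrder M₁] [IsStrictOrderedRing M₁] [CommSemiring M₂] [LinearOrder M₂] [IsStrictOrderedRing M₂]
    (hd₁ : ∀ a x : M₁, ¬(a < x ∧ x < a + 1)) (hd₂ : ∀ a x : M₂, ¬(a < x ∧ x < a + 1))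
    (f : M₁ ≃o M₂) (x : M₁) (n : ℕ) : f (x + n) = f x + n := by
  induction n with
  | zero => simp
  | succ n ih =>
    push_cast
    rw [← add_assoc, orderIso_add_one hd₂ hd₁ f, ih, add_assoc]

/-- an order isomorphism maps `E⁰` onto `E⁰` (and nonstandard elements to
nonstandard elements). -/
theorem orderIso_maps_E0 {M₁ M₂ : Type*}
    [CommSemiring M₁] [LinearOrder M₁] [IsStrictOrderedRing M₁] [CommSemiring M₂] [LinearOrder M₂] [IsStrictOrderedRing M₂]
    (h0₁ : ∀ x : M₁, 0 ≤ x) (h0₂ : ∀ x : M₂, 0 ≤ x)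
    (hd₁ : ∀ a x : M₁, ¬(a < x ∧ x < a + 1)) (hd₂ : ∀ a x : M₂, ¬(a < x ∧ x < a + 1))
    (f : M₁ ≃o M₂) (a b : M₁) (ha : Nonstd a) (hb : Nonstd b) :
    Nonstd (f a) ∧ (E0 a b ↔ E0 (f a) (f b)) := by
  constructor
  · intro n
    rw [← orderIso_nat h0₁ h0₂ hd₁ hd₂ f n]
    exact f.lt_iff_lt.mpr (ha n)
  · constructor
    · rintro ⟨n, h1, h2⟩
      exact ⟨n, by rw [← orderIso_nat_add hd₁ hd₂ f]; exact f.lt_iff_lt.mpr h1,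
        by rw [← orderIso_nat_add hd₁ hd₂ f]; exact f.lt_iff_lt.mpr h2⟩
    · rintro ⟨n, h1, h2⟩
      refine ⟨n, ?_, ?_⟩
      · rw [← f.lt_iff_lt, orderIso_nat_add hd₁ hd₂ f]; exact h1
      · rw [← f.lt_iff_lt, orderIso_nat_add hd₁ hd₂ f]; exact h2
end

section
/- Let f : M₁ ≃o M₂ be an almost {<,+}-isomorphism. Then for all nonstandard a, b ∈ M₁: a E¹ b in M₁ iff f a E¹ f b in M₂, and a E² b in M₁ iff f a E² f b in M₂. -/
section Aux
variable {M₁ M₂ : Type*} [CommSemiring M₁] [LinearOrder M₁] [IsStrictOrderedRing M₁] [CommSemiring M₂] [LinearOrder M₂] [IsStrictOrderedRing M₂]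

lemma aux_succ_le {M : Type*} [CommSemiring M] [LinearOrder M] [IsStrictOrderedRing M]
    (hd : ∀ a x : M, ¬(a < x ∧ x < a + 1)) {w x : M} (h : w < x) : w + 1 ≤ x :=
  le_of_not_gt fun hlt => hd w x ⟨h, hlt⟩

lemma aux_zero (h0₁ : ∀ x : M₁, 0 ≤ x) (h0₂ : ∀ x : M₂, 0 ≤ x) (f : M₁ ≃o M₂) :
    f 0 = 0 := by
  refine le_antisymm ?_ (h0₂ _)
  have : f 0 ≤ f (f.symm 0) := f.le_iff_le.mpr (h0₁ _)
  simpa using this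

lemma aux_add_nat (hd₂ : ∀ a x : M₂, ¬(a < x ∧ x < a + 1)) (f : M₁ ≃o M₂)
    (w : M₁) (n : ℕ) : f w + (n : M₂) ≤ f (w + (n : M₁)) := by
  induction n with
  | zero => simp
  | succ n ih =>
    have h1 : f (w + (n:M₁)) + 1 ≤ f (w + (n:M₁) + 1) :=
      aux_succ_le hd₂ (f.lt_iff_lt.mpr (lt_add_one _))
    have h2 : f w + ((n:M₂) + 1) ≤ f (w + ((n:M₁) + 1)) := by
      calc f w + ((n:M₂)+1) = (f w + (n:M₂)) + 1 := by ring
        _ ≤ f (w + (n:M₁)) + 1 := add_le_add_left ih _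
        _ ≤ f (w + (n:M₁) + 1) := h1
        _ = f (w + ((n:M₁) + 1)) := by rw [add_assoc]
    push_cast
    exact h2

lemma aux_nat (h0₁ : ∀ x : M₁, 0 ≤ x) (h0₂ : ∀ x : M₂, 0 ≤ x)
    (hd₁ : ∀ a x : M₁, ¬(a < x ∧ x < a + 1)) (hd₂ : ∀ a x : M₂, ¬(a < x ∧ x < a + 1))
    (f : M₁ ≃o M₂) (n : ℕ) : f (n : M₁) = (n : M₂) := by
  induction n with
  | zero => simpa using aux_zero h0₁ h0₂ f
  | succ n ih =>
    have hge : (n:M₂) + 1 ≤ f ((n:M₁) + 1) := by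
      have := aux_add_nat hd₂ f (n:M₁) 1
      simpa [ih] using this
    have hle : f ((n:M₁) + 1) ≤ (n:M₂) + 1 := by
      have hnx : (n:M₁) < f.symm ((n:M₂) + 1) := by
        rw [← f.lt_iff_lt, ih, f.apply_symm_apply]
        exact lt_add_one _
      have h1 : (n:M₁) + 1 ≤ f.symm ((n:M₂) + 1) := aux_succ_le hd₁ hnx
      have h2 := f.le_iff_le.mpr h1
      simpa using h2
    push_cast
    exact le_antisymm hle hge

lemma aux_nonstd (h0₁ : ∀ x : M₁, 0 ≤ x) (h0₂ : ∀ x : M₂, 0 ≤ x)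
    (hd₁ : ∀ a x : M₁, ¬(a < x ∧ x < a + 1)) (hd₂ : ∀ a x : M₂, ¬(a < x ∧ x < a + 1))
    (f : M₁ ≃o M₂) {a : M₁} (ha : Nonstd a) : Nonstd (f a) := fun n => by
  rw [← aux_nat h0₁ h0₂ hd₁ hd₂ f n]
  exact f.lt_iff_lt.mpr (ha n)

lemma aux_symm (hd₂ : ∀ a x : M₂, ¬(a < x ∧ x < a + 1))
    (f : M₁ ≃o M₂) (hf : IsAlmostAddIso f) : IsAlmostAddIso f.symm := by
  intro x y
  obtain ⟨n, h1, h2⟩ := hf (f.symm x) (f.symm y)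
  rw [f.apply_symm_apply, f.apply_symm_apply] at h1 h2
  refine ⟨n, ?_, ?_⟩
  · rw [← f.lt_iff_lt, f.apply_symm_apply]
    calc x + y < f (f.symm x + f.symm y) + (n:M₂) := h2
      _ ≤ f (f.symm x + f.symm y + (n:M₁)) := aux_add_nat hd₂ f _ n
  · rw [← f.lt_iff_lt]
    calc f (f.symm x + f.symm y) < x + y + (n:M₂) := h1
      _ = f (f.symm (x + y)) + (n:M₂) := by rw [f.apply_symm_apply]
      _ ≤ f (f.symm (x + y) + (n:M₁)) := aux_add_nat hd₂ f _ n

lemma aux_superadd (f : M₁ ≃o M₂) (hf : IsAlmostAddIso f) (h0₂ : ∀ x : M₂, 0 ≤ x)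
    (c : M₁) (n : ℕ) : ∃ E : ℕ, (n:M₂) * f c ≤ f ((n:M₁) * c) + (E:M₂) := by
  induction n with
  | zero =>
    refine ⟨0, ?_⟩
    simpa using h0₂ (f 0)
  | succ n ih =>
    obtain ⟨E, hE⟩ := ih
    obtain ⟨e, _, he2⟩ := hf ((n:M₁)*c) c
    refine ⟨E + e, ?_⟩
    have key : ((n:ℕ)+1:M₂) * f c ≤ f (((n:M₁)+1) * c) + ((E:M₂) + (e:M₂)) := by
      calc ((n:ℕ)+1:M₂) * f c = (n:M₂) * f c + f c := by ring
        _ ≤ (f ((n:M₁)*c) + (E:M₂)) + f c := add_le_add_left hE _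
        _ = (f ((n:M₁)*c) + f c) + (E:M₂) := by ring
        _ ≤ (f ((n:M₁)*c + c) + (e:M₂)) + (E:M₂) := add_le_add_left he2.le _
        _ = f (((n:M₁)+1) * c) + ((E:M₂) + (e:M₂)) := by rw [add_one_mul]; ring
    push_cast
    push_cast at key
    exact key

lemma aux_subadd (f : M₁ ≃o M₂) (hf : IsAlmostAddIso f)
    (h0₁ : ∀ x : M₁, 0 ≤ x) (h0₂ : ∀ x : M₂, 0 ≤ x)
    (hd₁ : ∀ a x : M₁, ¬(a < x ∧ x < a + 1)) (hd₂ : ∀ a x : M₂, ¬(a < x ∧ x < a + 1))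
    (c : M₁) (n : ℕ) : ∃ E : ℕ, f ((n:M₁) * c) ≤ (n:M₂) * f c + (E:M₂) := by
  induction n with
  | zero =>
    refine ⟨0, ?_⟩
    have h := aux_zero h0₁ h0₂ f
    simp [h]
  | succ n ih =>
    obtain ⟨E, hE⟩ := ih
    obtain ⟨e, he1, _⟩ := hf ((n:M₁)*c) c
    refine ⟨E + e, ?_⟩
    have key : f (((n:M₁)+1) * c) ≤ ((n:ℕ)+1:M₂) * f c + ((E:M₂) + (e:M₂)) := by
      calc f (((n:M₁)+1) * c) = f ((n:M₁)*c + c) := by rw [add_one_mul]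
        _ ≤ f ((n:M₁)*c) + f c + (e:M₂) := he1.le
        _ ≤ ((n:M₂) * f c + (E:M₂)) + f c + (e:M₂) := by
            exact add_le_add_left (add_le_add_left hE _) _
        _ = ((n:ℕ)+1:M₂) * f c + ((E:M₂) + (e:M₂)) := by push_cast; ring
    push_cast
    push_cast at key
    exact key

lemma aux_key (f : M₁ ≃o M₂) (hf : IsAlmostAddIso f) (h0₂ : ∀ x : M₂, 0 ≤ x)
    {c a : M₁} (hfc : Nonstd (f c))
    (h : ∀ n : ℕ, (n:M₁) * c < a) : ∀ n : ℕ, (n:M₂) * f c < f a := by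
  intro n
  obtain ⟨E, hE⟩ := aux_superadd f hf h0₂ c n
  obtain ⟨e, _, he2⟩ := hf ((n:M₁)*c) c
  have hEe : ((E + e : ℕ):M₂) < f c := hfc _
  have h3 : f ((n:M₁)*c) + (E:M₂) < f ((n:M₁)*c + c) := by
    refine lt_of_add_lt_add_right (a := (e:M₂)) ?_
    calc f ((n:M₁)*c) + (E:M₂) + (e:M₂) = f ((n:M₁)*c) + ((E+e:ℕ):M₂) := by push_cast; ring
      _ < f ((n:M₁)*c) + f c := add_lt_add_right hEe _
      _ < f ((n:M₁)*c + c) + (e:M₂) := he2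
  have h5 : (n:M₁)*c + c < a := by
    have h6 := h (n+1)
    have e6 : ((n+1:ℕ):M₁)*c = (n:M₁)*c + c := by push_cast; ring
    rwa [e6] at h6
  calc (n:M₂) * f c ≤ f ((n:M₁)*c) + (E:M₂) := hE
    _ < f ((n:M₁)*c + c) := h3
    _ < f a := f.lt_iff_lt.mpr h5

end Aux

section Main
variable {M₁ M₂ : Type*} [CommSemiring M₁] [LinearOrder M₁] [IsStrictOrderedRing M₁] [CommSemiring M₂] [LinearOrder M₂] [IsStrictOrderedRing M₂]

lemma aux_E1 (h0₁ : ∀ x : M₁, 0 ≤ x) (h0₂ : ∀ x : M₂, 0 ≤ x)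
    (hd₁ : ∀ a x : M₁, ¬(a < x ∧ x < a + 1)) (hd₂ : ∀ a x : M₂, ¬(a < x ∧ x < a + 1))
    (f : M₁ ≃o M₂) (hf : IsAlmostAddIso f)
    (a b : M₁) (ha : Nonstd a) (hb : Nonstd b) (h : E1 a b) : E1 (f a) (f b) := by
  obtain ⟨c, hc, hab, hba⟩ := h
  have hfa := aux_nonstd h0₁ h0₂ hd₁ hd₂ f ha
  have hfb := aux_nonstd h0₁ h0₂ hd₁ hd₂ f hb
  obtain ⟨k₁, hk₁, _⟩ := hf b c
  obtain ⟨k₂, hk₂, _⟩ := hf a c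
  by_cases hcs : ∃ m : ℕ, c ≤ (m:M₁)
  · obtain ⟨m, hm⟩ := hcs
    have hfc : f c ≤ (m:M₂) := by
      rw [← aux_nat h0₁ h0₂ hd₁ hd₂ f m]; exact f.le_iff_le.mpr hm
    refine ⟨((m + k₁ + k₂ : ℕ):M₂), fun n => ⟨?_, ?_⟩, ?_, ?_⟩
    · calc (n:M₂) * ((m + k₁ + k₂ : ℕ):M₂) = ((n*(m+k₁+k₂):ℕ):M₂) := by push_cast; ring
        _ < f a := hfa _
    · calc (n:M₂) * ((m + k₁ + k₂ : ℕ):M₂) = ((n*(m+k₁+k₂):ℕ):M₂) := by push_cast; ring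
        _ < f b := hfb _
    · calc f a < f (b + c) := f.lt_iff_lt.mpr hab
        _ < f b + f c + (k₁:M₂) := hk₁
        _ ≤ f b + (m:M₂) + (k₁:M₂) := add_le_add_left (add_le_add_right hfc _) _
        _ ≤ f b + ((m + k₁ + k₂ : ℕ):M₂) := by
            rw [add_assoc]
            refine add_le_add_right ?_ _
            calc (m:M₂) + (k₁:M₂) = ((m+k₁:ℕ):M₂) := by push_cast; ring
              _ ≤ ((m+k₁+k₂:ℕ):M₂) := Nat.cast_le.mpr (by omega)
    · calc f b < f (a + c) := f.lt_iff_lt.mpr hba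
        _ < f a + f c + (k₂:M₂) := hk₂
        _ ≤ f a + (m:M₂) + (k₂:M₂) := add_le_add_left (add_le_add_right hfc _) _
        _ ≤ f a + ((m + k₁ + k₂ : ℕ):M₂) := by
            rw [add_assoc]
            refine add_le_add_right ?_ _
            calc (m:M₂) + (k₂:M₂) = ((m+k₂:ℕ):M₂) := by push_cast; ring
              _ ≤ ((m+k₁+k₂:ℕ):M₂) := Nat.cast_le.mpr (by omega)
  · push_neg at hcs
    have hc' : Nonstd c := fun m => hcs m
    have hfc := aux_nonstd h0₁ h0₂ hd₁ hd₂ f hc'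
    refine ⟨f c + f c, fun n => ⟨?_, ?_⟩, ?_, ?_⟩
    · calc (n:M₂) * (f c + f c) = ((2*n:ℕ):M₂) * f c := by push_cast; ring
        _ < f a := aux_key f hf h0₂ hfc (fun k => (hc k).1) (2*n)
    · calc (n:M₂) * (f c + f c) = ((2*n:ℕ):M₂) * f c := by push_cast; ring
        _ < f b := aux_key f hf h0₂ hfc (fun k => (hc k).2) (2*n)
    · calc f a < f (b + c) := f.lt_iff_lt.mpr hab
        _ < f b + f c + (k₁:M₂) := hk₁
        _ < f b + f c + f c := add_lt_add_right (hfc k₁) _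
        _ = f b + (f c + f c) := by ring
    · calc f b < f (a + c) := f.lt_iff_lt.mpr hba
        _ < f a + f c + (k₂:M₂) := hk₂
        _ < f a + f c + f c := add_lt_add_right (hfc k₂) _
        _ = f a + (f c + f c) := by ring

lemma aux_E2 (h0₁ : ∀ x : M₁, 0 ≤ x) (h0₂ : ∀ x : M₂, 0 ≤ x)
    (hd₁ : ∀ a x : M₁, ¬(a < x ∧ x < a + 1)) (hd₂ : ∀ a x : M₂, ¬(a < x ∧ x < a + 1))
    (f : M₁ ≃o M₂) (hf : IsAlmostAddIso f)
    (a b : M₁) (ha : Nonstd a) (hb : Nonstd b) (h : E2 a b) : E2 (f a) (f b) := by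
  obtain ⟨n, h1, h2⟩ := h
  have hfa := aux_nonstd h0₁ h0₂ hd₁ hd₂ f ha
  have hfb := aux_nonstd h0₁ h0₂ hd₁ hd₂ f hb
  obtain ⟨E₁, hE₁⟩ := aux_subadd f hf h0₁ h0₂ hd₁ hd₂ b n
  obtain ⟨E₂, hE₂⟩ := aux_subadd f hf h0₁ h0₂ hd₁ hd₂ a n
  refine ⟨n+1, ?_, ?_⟩
  · calc f a < f ((n:M₁)*b) := f.lt_iff_lt.mpr h1
      _ ≤ (n:M₂)*f b + (E₁:M₂) := hE₁
      _ < (n:M₂)*f b + f b := add_lt_add_right (hfb E₁) _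
      _ = ((n+1:ℕ):M₂) * f b := by push_cast; ring
  · calc f b < f ((n:M₁)*a) := f.lt_iff_lt.mpr h2
      _ ≤ (n:M₂)*f a + (E₂:M₂) := hE₂
      _ < (n:M₂)*f a + f a := add_lt_add_right (hfa E₂) _
      _ = ((n+1:ℕ):M₂) * f a := by push_cast; ring


end Main

/-- an almost `{<,+}`-isomorphism maps `E¹` onto `E¹` and `E²` onto `E²`. -/
theorem almostAddIso_maps_E1_E2 {M₁ M₂ : Type*}
    [CommSemiring M₁] [LinearOrder M₁] [IsStrictOrderedRing M₁] [CommSemiring M₂] [LinearOrder M₂] [IsStrictOrderedRing M₂]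
    (h0₁ : ∀ x : M₁, 0 ≤ x) (h0₂ : ∀ x : M₂, 0 ≤ x)
    (hd₁ : ∀ a x : M₁, ¬(a < x ∧ x < a + 1)) (hd₂ : ∀ a x : M₂, ¬(a < x ∧ x < a + 1))
    (f : M₁ ≃o M₂) (hf : IsAlmostAddIso f)
    (a b : M₁) (ha : Nonstd a) (hb : Nonstd b) :
    (E1 a b ↔ E1 (f a) (f b)) ∧ (E2 a b ↔ E2 (f a) (f b)) := by
  have hf' := aux_symm hd₂ f hf
  have hfa := aux_nonstd h0₁ h0₂ hd₁ hd₂ f ha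
  have hfb := aux_nonstd h0₁ h0₂ hd₁ hd₂ f hb
  refine ⟨⟨aux_E1 h0₁ h0₂ hd₁ hd₂ f hf a b ha hb, fun h => ?_⟩,
          ⟨aux_E2 h0₁ h0₂ hd₁ hd₂ f hf a b ha hb, fun h => ?_⟩⟩
  · have := aux_E1 h0₂ h0₁ hd₂ hd₁ f.symm hf' (f a) (f b) hfa hfb h
    simpa using this
  · have := aux_E2 h0₂ h0₁ hd₂ hd₁ f.symm hf' (f a) (f b) hfa hfb h
    simpa using this
end

section
/- For all nonstandard a, b ∈ M: a E⁰ b implies a E¹ b; a E¹ b implies a E² b; a E² b implies a E³ b; and a E³ b implies a E⁴ b. -/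
/-- for nonstandard `a, b`, `E⁰ ⊆ E¹ ⊆ E² ⊆ E³ ⊆ E⁴`. -/
theorem E_chain {M : Type*} [CommSemiring M] [LinearOrder M] [IsStrictOrderedRing M]
    (h0 : ∀ x : M, 0 ≤ x)
    (a b : M) (ha : Nonstd a) (hb : Nonstd b) :
    (E0 a b → E1 a b) ∧ (E1 a b → E2 a b) ∧ (E2 a b → E3 a b) ∧ (E3 a b → E4 a b) := by
  refine ⟨?_, ?_, ?_, ?_⟩
  · rintro ⟨n, h1, h2⟩
    refine ⟨(n : M), fun m => ?_, h1, h2⟩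
    constructor
    · calc (m : M) * (n : M) = ((m * n : ℕ) : M) := by push_cast; ring
        _ < a := ha _
    · calc (m : M) * (n : M) = ((m * n : ℕ) : M) := by push_cast; ring
        _ < b := hb _
  · rintro ⟨c, hc, h1, h2⟩
    have hcb : c < b := by simpa using (hc 1).2
    have hca : c < a := by simpa using (hc 1).1
    refine ⟨2, ?_, ?_⟩
    · calc a < b + c := h1
        _ ≤ b + b := by exact add_le_add_right hcb.le b
        _ = (2 : M) * b := (two_mul b).symm
        _ = ((2 : ℕ) : M) * b := by norm_num
    · calc b < a + c := h2
        _ ≤ a + a := by exact add_le_add_right hca.le a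
        _ = (2 : M) * a := (two_mul a).symm
        _ = ((2 : ℕ) : M) * a := by norm_num
  · rintro ⟨n, h1, h2⟩
    refine ⟨((n + 1 : ℕ) : M), fun m => ?_, ?_, ?_⟩
    · constructor
      · calc ((n + 1 : ℕ) : M) ^ m = (((n + 1) ^ m : ℕ) : M) := by push_cast; ring
          _ < a := ha _
      · calc ((n + 1 : ℕ) : M) ^ m = (((n + 1) ^ m : ℕ) : M) := by push_cast; ring
          _ < b := hb _
    · calc a < (n : M) * b := h1
        _ ≤ ((n + 1 : ℕ) : M) * b := by
            apply mul_le_mul_of_nonneg_right _ (h0 b)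
            exact_mod_cast Nat.cast_le.mpr (Nat.le_succ n)
        _ = b * ((n + 1 : ℕ) : M) := mul_comm _ _
    · calc b < (n : M) * a := h2
        _ ≤ ((n + 1 : ℕ) : M) * a := by
            apply mul_le_mul_of_nonneg_right _ (h0 a)
            exact_mod_cast Nat.cast_le.mpr (Nat.le_succ n)
        _ = a * ((n + 1 : ℕ) : M) := mul_comm _ _
  · rintro ⟨c, hc, h1, h2⟩
    have hcb : c < b := by simpa using (hc 1).2
    have hca : c < a := by simpa using (hc 1).1
    refine ⟨2, ?_, ?_⟩
    · calc a < b * c := h1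
        _ ≤ b * b := mul_le_mul_of_nonneg_left hcb.le (h0 b)
        _ = b ^ 2 := (sq b).symm
    · calc b < a * c := h2
        _ ≤ a * a := mul_le_mul_of_nonneg_left hca.le (h0 a)
        _ = a ^ 2 := (sq a).symm
end

section
/- Let a₁, a₂, b₁, b₂ be nonstandard elements of M. For each ℓ ∈ {0, 1, 2, 3, 4}: if a₁ Eℓ b₁ and a₂ Eℓ b₂, then (a₁ + a₂) Eℓ (b₁ + b₂). -/
/-- each of `E⁰, E¹, E², E³, E⁴` is preserved under addition. -/
theorem E_add {M : Type*} [CommSemiring M] [LinearOrder M] [IsStrictOrderedRing M]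
    (h0 : ∀ x : M, 0 ≤ x)
    (a₁ a₂ b₁ b₂ : M) (ha₁ : Nonstd a₁) (ha₂ : Nonstd a₂)
    (hb₁ : Nonstd b₁) (hb₂ : Nonstd b₂) :
    (E0 a₁ b₁ → E0 a₂ b₂ → E0 (a₁ + a₂) (b₁ + b₂)) ∧
    (E1 a₁ b₁ → E1 a₂ b₂ → E1 (a₁ + a₂) (b₁ + b₂)) ∧
    (E2 a₁ b₁ → E2 a₂ b₂ → E2 (a₁ + a₂) (b₁ + b₂)) ∧
    (E3 a₁ b₁ → E3 a₂ b₂ → E3 (a₁ + a₂) (b₁ + b₂)) ∧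
    (E4 a₁ b₁ → E4 a₂ b₂ → E4 (a₁ + a₂) (b₁ + b₂)) := by
  constructor
  · rintro ⟨n₁, h₁, h₁'⟩ ⟨n₂, h₂, h₂'⟩
    refine ⟨n₁ + n₂, ?_, ?_⟩
    · push_cast
      calc a₁ + a₂ < (b₁ + (n₁ : M)) + (b₂ + (n₂ : M)) := add_lt_add h₁ h₂
        _ = b₁ + b₂ + ((n₁ : M) + (n₂ : M)) := by ring
    · push_cast
      calc b₁ + b₂ < (a₁ + (n₁ : M)) + (a₂ + (n₂ : M)) := add_lt_add h₁' h₂'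
        _ = a₁ + a₂ + ((n₁ : M) + (n₂ : M)) := by ring
  constructor
  · rintro ⟨c₁, h₁, h₁a, h₁b⟩ ⟨c₂, h₂, h₂a, h₂b⟩
    refine ⟨c₁ + c₂, fun n => ⟨?_, ?_⟩, ?_, ?_⟩
    · rw [mul_add]; exact add_lt_add (h₁ n).1 (h₂ n).1
    · rw [mul_add]; exact add_lt_add (h₁ n).2 (h₂ n).2
    · calc a₁ + a₂ < (b₁ + c₁) + (b₂ + c₂) := add_lt_add h₁a h₂a
        _ = b₁ + b₂ + (c₁ + c₂) := by ring
    · calc b₁ + b₂ < (a₁ + c₁) + (a₂ + c₂) := add_lt_add h₁b h₂b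
        _ = a₁ + a₂ + (c₁ + c₂) := by ring
  constructor
  · rintro ⟨n₁, h₁, h₁'⟩ ⟨n₂, h₂, h₂'⟩
    refine ⟨max n₁ n₂, ?_, ?_⟩ <;> push_cast
    · have e1 : (n₁ : M) * b₁ ≤ (max n₁ n₂ : M) * b₁ :=
        mul_le_mul_of_nonneg_right (le_max_left _ _) (h0 b₁)
      have e2 : (n₂ : M) * b₂ ≤ (max n₁ n₂ : M) * b₂ :=
        mul_le_mul_of_nonneg_right (le_max_right _ _) (h0 b₂)
      calc a₁ + a₂ < (max n₁ n₂ : M) * b₁ + (max n₁ n₂ : M) * b₂ :=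
            add_lt_add (h₁.trans_le e1) (h₂.trans_le e2)
        _ = (max n₁ n₂ : M) * (b₁ + b₂) := (mul_add _ _ _).symm
    · have e1 : (n₁ : M) * a₁ ≤ (max n₁ n₂ : M) * a₁ :=
        mul_le_mul_of_nonneg_right (le_max_left _ _) (h0 a₁)
      have e2 : (n₂ : M) * a₂ ≤ (max n₁ n₂ : M) * a₂ :=
        mul_le_mul_of_nonneg_right (le_max_right _ _) (h0 a₂)
      calc b₁ + b₂ < (max n₁ n₂ : M) * a₁ + (max n₁ n₂ : M) * a₂ :=
            add_lt_add (h₁'.trans_le e1) (h₂'.trans_le e2)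
        _ = (max n₁ n₂ : M) * (a₁ + a₂) := (mul_add _ _ _).symm
  constructor
  · rintro ⟨c₁, h₁, h₁a, h₁b⟩ ⟨c₂, h₂, h₂a, h₂b⟩
    refine ⟨max c₁ c₂, fun n => ⟨?_, ?_⟩, ?_, ?_⟩
    · rcases max_cases c₁ c₂ with ⟨he, _⟩ | ⟨he, _⟩ <;> rw [he]
      · exact ((h₁ n).1).trans_le (le_add_of_nonneg_right (h0 a₂))
      · exact ((h₂ n).1).trans_le (le_add_of_nonneg_left (h0 a₁))
    · rcases max_cases c₁ c₂ with ⟨he, _⟩ | ⟨he, _⟩ <;> rw [he]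
      · exact ((h₁ n).2).trans_le (le_add_of_nonneg_right (h0 b₂))
      · exact ((h₂ n).2).trans_le (le_add_of_nonneg_left (h0 b₁))
    · calc a₁ + a₂ < b₁ * c₁ + b₂ * c₂ := add_lt_add h₁a h₂a
        _ ≤ b₁ * max c₁ c₂ + b₂ * max c₁ c₂ :=
            add_le_add (mul_le_mul_of_nonneg_left (le_max_left _ _) (h0 b₁))
              (mul_le_mul_of_nonneg_left (le_max_right _ _) (h0 b₂))
        _ = (b₁ + b₂) * max c₁ c₂ := (add_mul _ _ _).symm
    · calc b₁ + b₂ < a₁ * c₁ + a₂ * c₂ := add_lt_add h₁b h₂b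
        _ ≤ a₁ * max c₁ c₂ + a₂ * max c₁ c₂ :=
            add_le_add (mul_le_mul_of_nonneg_left (le_max_left _ _) (h0 a₁))
              (mul_le_mul_of_nonneg_left (le_max_right _ _) (h0 a₂))
        _ = (a₁ + a₂) * max c₁ c₂ := (add_mul _ _ _).symm
  · rintro ⟨n₁, h₁, h₁'⟩ ⟨n₂, h₂, h₂'⟩
    have key : ∀ x y u v : M, Nonstd x → Nonstd y → u < x ^ n₁ → v < y ^ n₂ →
        u + v < (x + y) ^ (max n₁ n₂ + 1) := by
      intro x y u v hx hy hu hv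
      have hx1 : (1 : M) ≤ x := by
        have := hx 1; rw [Nat.cast_one] at this; exact this.le
      have hy1 : (1 : M) ≤ y := by
        have := hy 1; rw [Nat.cast_one] at this; exact this.le
      have hxy1 : (1 : M) ≤ x + y := hx1.trans (le_add_of_nonneg_right (h0 y))
      have h2 : (2 : M) ≤ x + y := by
        have := hx 2; push_cast at this
        exact this.le.trans (le_add_of_nonneg_right (h0 y))
      have e1 : x ^ n₁ ≤ (x + y) ^ (max n₁ n₂) :=
        (pow_le_pow_left₀ (h0 x) (le_add_of_nonneg_right (h0 y)) n₁).trans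
          (pow_le_pow_right₀ hxy1 (le_max_left _ _))
      have e2 : y ^ n₂ ≤ (x + y) ^ (max n₁ n₂) :=
        (pow_le_pow_left₀ (h0 y) (le_add_of_nonneg_left (h0 x)) n₂).trans
          (pow_le_pow_right₀ hxy1 (le_max_right _ _))
      calc u + v < (x + y) ^ (max n₁ n₂) + (x + y) ^ (max n₁ n₂) :=
            add_lt_add (hu.trans_le e1) (hv.trans_le e2)
        _ = (x + y) ^ (max n₁ n₂) * 2 := by ring
        _ ≤ (x + y) ^ (max n₁ n₂) * (x + y) :=
            mul_le_mul_of_nonneg_left h2 (h0 _)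
        _ = (x + y) ^ (max n₁ n₂ + 1) := (pow_succ _ _).symm
    exact ⟨max n₁ n₂ + 1, key b₁ b₂ a₁ a₂ hb₁ hb₂ h₁ h₂,
      key a₁ a₂ b₁ b₂ ha₁ ha₂ h₁' h₂'⟩
end

section
/- If there are order automorphisms f₁, f₂ : M ≃o M with f₁ a₁ = b₁ and f₂ a₂ = b₂, then there is an order automorphism f : M ≃o M with f (a₁ + a₂) = b₁ + b₂ (that is, a₁ E⁵ b₁ and a₂ E⁵ b₂ imply (a₁ + a₂) E⁵ (b₁ + b₂)). -/
/-- `E⁵` is preserved under addition. -/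
theorem E5_add {M : Type*} [CommSemiring M] [LinearOrder M] [IsStrictOrderedRing M]
    (h0 : ∀ x : M, 0 ≤ x)
    (hsub : ∀ a b : M, a ≤ b → ∃ c, b = a + c)
    (a₁ a₂ b₁ b₂ : M)
    (f₁ : M ≃o M) (hf₁ : f₁ a₁ = b₁) (f₂ : M ≃o M) (hf₂ : f₂ a₂ = b₂) :
    ∃ f : M ≃o M, f (a₁ + a₂) = b₁ + b₂ := by
  classical
  have hcancel : ∀ x c d : M, x + c = x + d → c = d := fun x c d h => add_left_cancel h
  have hf20 : f₂ 0 = 0 := by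
    have h1 : (0:M) ≤ f₂ 0 := h0 _
    have h2 : f₂ 0 ≤ f₂ (f₂.symm 0) := f₂.le_iff_le.mpr (h0 _)
    rw [f₂.apply_symm_apply] at h2
    exact le_antisymm h2 h1
  set g : M → M := fun x =>
    if hx : a₁ ≤ x then b₁ + f₂ (Classical.choose (hsub a₁ x hx)) else f₁ x with hg
  have hspec : ∀ (x : M) (hx : a₁ ≤ x), x = a₁ + Classical.choose (hsub a₁ x hx) :=
    fun x hx => Classical.choose_spec (hsub a₁ x hx)
  have hmono : StrictMono g := by
    intro x y hxy
    by_cases hx : a₁ ≤ x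
    · have hy : a₁ ≤ y := hx.trans hxy.le
      simp only [hg, dif_pos hx, dif_pos hy]
      have hcc : Classical.choose (hsub a₁ x hx) < Classical.choose (hsub a₁ y hy) := by
        have h1 := hspec x hx
        have h2 := hspec y hy
        have : a₁ + Classical.choose (hsub a₁ x hx) < a₁ + Classical.choose (hsub a₁ y hy) := by
          rw [← h1, ← h2]; exact hxy
        exact lt_of_add_lt_add_left this
      exact add_lt_add_right (f₂.strictMono hcc) _
    · by_cases hy : a₁ ≤ y
      · simp only [hg, dif_neg hx, dif_pos hy]
        have h1 : f₁ x < b₁ := by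
          rw [← hf₁]; exact f₁.strictMono (lt_of_not_ge hx)
        exact h1.trans_le (le_add_of_nonneg_right (h0 _))
      · simp only [hg, dif_neg hx, dif_neg hy]
        exact f₁.strictMono hxy
  have hsurj : Function.Surjective g := by
    intro y
    rcases le_or_gt y b₁ with hy | hy
    · rcases eq_or_lt_of_le hy with rfl | hy'
      · refine ⟨a₁, ?_⟩
        have hx : a₁ ≤ a₁ := le_rfl
        simp only [hg, dif_pos hx]
        have hc : Classical.choose (hsub a₁ a₁ hx) = 0 := by
          apply hcancel a₁
          rw [← hspec a₁ hx, add_zero]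
        rw [hc, hf20, add_zero]
      · refine ⟨f₁.symm y, ?_⟩
        have hlt : f₁.symm y < a₁ := by
          have : f₁ (f₁.symm y) < f₁ a₁ := by rw [f₁.apply_symm_apply, hf₁]; exact hy'
          exact f₁.lt_iff_lt.mp this
        simp only [hg, dif_neg (not_le.mpr hlt), f₁.apply_symm_apply]
    · obtain ⟨d, hd⟩ := hsub b₁ y hy.le
      refine ⟨a₁ + f₂.symm d, ?_⟩
      have hx : a₁ ≤ a₁ + f₂.symm d := le_add_of_nonneg_right (h0 _)
      simp only [hg, dif_pos hx]
      have hc : Classical.choose (hsub a₁ (a₁ + f₂.symm d) hx) = f₂.symm d :=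
        hcancel a₁ _ _ (hspec _ hx).symm
      rw [hc, f₂.apply_symm_apply, ← hd]
  refine ⟨StrictMono.orderIsoOfSurjective g hmono hsurj, ?_⟩
  show g (a₁ + a₂) = b₁ + b₂
  have hx : a₁ ≤ a₁ + a₂ := le_add_of_nonneg_right (h0 _)
  simp only [hg, dif_pos hx]
  have hc : Classical.choose (hsub a₁ (a₁ + a₂) hx) = a₂ :=
    hcancel a₁ _ _ (hspec _ hx).symm
  rw [hc, hf₂]
end

section
/- Let a₁, a₂, b₁, b₂ be nonstandard elements of M. For each ℓ ∈ {2, 3, 4}: if a₁ Eℓ b₁ and a₂ Eℓ b₂, then (a₁ * a₂) Eℓ (b₁ * b₂). -/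
/-- each of `E², E³, E⁴` is preserved under multiplication. -/
theorem E_mul {M : Type*} [CommSemiring M] [LinearOrder M] [IsStrictOrderedRing M]
    (h0 : ∀ x : M, 0 ≤ x)
    (a₁ a₂ b₁ b₂ : M) (ha₁ : Nonstd a₁) (ha₂ : Nonstd a₂)
    (hb₁ : Nonstd b₁) (hb₂ : Nonstd b₂) :
    (E2 a₁ b₁ → E2 a₂ b₂ → E2 (a₁ * a₂) (b₁ * b₂)) ∧
    (E3 a₁ b₁ → E3 a₂ b₂ → E3 (a₁ * a₂) (b₁ * b₂)) ∧
    (E4 a₁ b₁ → E4 a₂ b₂ → E4 (a₁ * a₂) (b₁ * b₂)) := by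
  refine ⟨?_, ?_, ?_⟩
  · rintro ⟨n, h1, h2⟩ ⟨m, h3, h4⟩
    refine ⟨n * m, ?_, ?_⟩
    · calc a₁ * a₂ < ((n : M) * b₁) * ((m : M) * b₂) :=
            mul_lt_mul'' h1 h3 (h0 _) (h0 _)
        _ = ((n * m : ℕ) : M) * (b₁ * b₂) := by push_cast; ring
    · calc b₁ * b₂ < ((n : M) * a₁) * ((m : M) * a₂) :=
            mul_lt_mul'' h2 h4 (h0 _) (h0 _)
        _ = ((n * m : ℕ) : M) * (a₁ * a₂) := by push_cast; ring
  · rintro ⟨c₁, hc₁, h1, h2⟩ ⟨c₂, hc₂, h3, h4⟩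
    refine ⟨c₁ * c₂, fun n => ?_, ?_, ?_⟩
    · rw [mul_pow]
      exact ⟨mul_lt_mul'' (hc₁ n).1 (hc₂ n).1 (h0 _) (h0 _),
             mul_lt_mul'' (hc₁ n).2 (hc₂ n).2 (h0 _) (h0 _)⟩
    · calc a₁ * a₂ < (b₁ * c₁) * (b₂ * c₂) := mul_lt_mul'' h1 h3 (h0 _) (h0 _)
        _ = (b₁ * b₂) * (c₁ * c₂) := by ring
    · calc b₁ * b₂ < (a₁ * c₁) * (a₂ * c₂) := mul_lt_mul'' h2 h4 (h0 _) (h0 _)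
        _ = (a₁ * a₂) * (c₁ * c₂) := by ring
  · rintro ⟨n, h1, h2⟩ ⟨m, h3, h4⟩
    have ob₁ : (1 : M) ≤ b₁ := by have := hb₁ 1; simpa using this.le
    have ob₂ : (1 : M) ≤ b₂ := by have := hb₂ 1; simpa using this.le
    have oa₁ : (1 : M) ≤ a₁ := by have := ha₁ 1; simpa using this.le
    have oa₂ : (1 : M) ≤ a₂ := by have := ha₂ 1; simpa using this.le
    refine ⟨max n m, ?_, ?_⟩
    · rw [mul_pow]
      exact mul_lt_mul''
        (h1.trans_le (pow_le_pow_right₀ ob₁ (le_max_left n m)))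
        (h3.trans_le (pow_le_pow_right₀ ob₂ (le_max_right n m))) (h0 _) (h0 _)
    · rw [mul_pow]
      exact mul_lt_mul''
        (h2.trans_le (pow_le_pow_right₀ oa₁ (le_max_left n m)))
        (h4.trans_le (pow_le_pow_right₀ oa₂ (le_max_right n m))) (h0 _) (h0 _)
end

section
/- Let a₁, a₂, b₁, b₂ be nonstandard elements of M. If a₁ E⁵ b₁ and a₂ E⁵ b₂, then (a₁ * a₂) E⁵ (b₁ * b₂); that is, if there are order automorphisms of M mapping a₁ to b₁ and a₂ to b₂, then there is an order automorphism of M mapping a₁ * a₂ to b₁ * b₂. -/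
namespace E5MulAux

variable {M : Type*} [CommSemiring M] [LinearOrder M] [IsStrictOrderedRing M]

/-- `x` and `y` are within a finite multiple of `d` of each other. -/
def near (d x y : M) : Prop := ∃ k : ℕ, x ≤ y + k • d ∧ y ≤ x + k • d

theorem near_refl (d x : M) : near d x x := ⟨0, by simp, by simp⟩

theorem near_symm {d x y : M} : near d x y → near d y x := fun ⟨k, h1, h2⟩ => ⟨k, h2, h1⟩

theorem near_trans {d x y z : M} : near d x y → near d y z → near d x z := by
  rintro ⟨k, h1, h2⟩ ⟨l, g1, g2⟩
  refine ⟨l + k, ?_, ?_⟩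
  · calc x ≤ y + k • d := h1
      _ ≤ (z + l • d) + k • d := add_le_add_left g1 _
      _ = z + (l + k) • d := by rw [add_nsmul, add_assoc]
  · calc z ≤ y + l • d := g2
      _ ≤ (x + k • d) + l • d := add_le_add_left h2 _
      _ = x + (k + l) • d := by rw [add_nsmul, add_assoc]
      _ = x + (l + k) • d := by rw [Nat.add_comm]

theorem near_intro (h0 : ∀ x : M, (0:M) ≤ x) {d x y : M} {k l : ℕ}
    (h1 : x ≤ y + k • d) (h2 : y ≤ x + l • d) : near d x y := by
  refine ⟨k + l, ?_, ?_⟩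
  · exact h1.trans (add_le_add_right (by
      rw [add_nsmul]; exact le_add_of_nonneg_right (h0 _)) _)
  · refine h2.trans (add_le_add_right ?_ _)
    rw [add_nsmul]; exact le_add_of_nonneg_left (h0 _)

/-- `β` dominates all finite multiples of `d`. -/
def Valid (d β : M) : Prop := ∀ k : ℕ, k • d ≤ β

def Good (d β : M) (j : ℤ) : Prop := 0 ≤ j ∨ Valid d β

theorem Good.succ {d β : M} {j : ℤ} (h : Good d β j) : Good d β (j + 1) := by
  rcases h with h | h
  · exact Or.inl (by omega)
  · exact Or.inr h

theorem Good.add_nat {d β : M} {j : ℤ} (h : Good d β j) (n : ℕ) : Good d β (j + n) := by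
  rcases h with h | h
  · exact Or.inl (by omega)
  · exact Or.inr h

theorem not_near_zero_of_valid {d u : M} (hd : 0 < d)
    (hv : Valid d u) : ¬ near d u 0 := by
  rintro ⟨k, h1, -⟩
  have h2 : (k + 1) • d ≤ u := hv (k + 1)
  rw [zero_add] at h1
  have h3 : k • d + d ≤ k • d + 0 := by
    rw [add_zero, ← succ_nsmul]; exact h2.trans h1
  exact absurd (le_of_add_le_add_left h3) (not_le.2 hd)

section Sub

variable (hsub : ∀ a b : M, a ≤ b → ∃ c, b = a + c)

/-- Truncated subtraction by choice. -/
noncomputable def subC (u v : M) : M := if h : v ≤ u then (hsub v u h).choose else 0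

theorem subC_spec {u v : M} (h : v ≤ u) : v + subC hsub u v = u := by
  rw [subC, dif_pos h]; exact ((hsub v u h).choose_spec).symm

theorem subC_eq (h0 : ∀ x : M, (0:M) ≤ x) {u v w : M} (h : v + w = u) :
    subC hsub u v = w := by
  have hv : v ≤ u := h ▸ le_add_of_nonneg_right (h0 w)
  have := subC_spec hsub hv
  exact add_left_cancel (this.trans h.symm)

/-- `β + j • d` for integer `j` (using truncated subtraction for negative `j`). -/
noncomputable def addZ (d β : M) (j : ℤ) : M :=
  if 0 ≤ j then β + j.toNat • d else subC hsub β ((-j).toNat • d)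

theorem addZ_coe (d β : M) (n : ℕ) : addZ hsub d β (n : ℤ) = β + n • d := by
  rw [addZ, if_pos (by omega)]
  simp

theorem addZ_zero (d β : M) : addZ hsub d β 0 = β := by
  simpa using addZ_coe hsub d β 0

theorem addZ_succ (h0 : ∀ x : M, (0:M) ≤ x) {d β : M} {j : ℤ} (hg : Good d β j) :
    addZ hsub d β (j + 1) = addZ hsub d β j + d := by
  rcases le_or_gt 0 j with hj | hj
  · rw [addZ, addZ, if_pos hj, if_pos (by omega), show (j + 1).toNat = j.toNat + 1 by omega,
      succ_nsmul, ← add_assoc]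
  · have hval : Valid d β := hg.resolve_left (by omega)
    rcases eq_or_lt_of_le (show j ≤ -1 by omega) with hj1 | hj1
    · subst hj1
      rw [show (-1 : ℤ) + 1 = 0 from by ring, addZ_zero]
      rw [addZ, if_neg (by omega), show ((-(-1:ℤ)).toNat) = 1 by omega]
      have h1 : (1:ℕ) • d ≤ β := hval 1
      have h2 := subC_spec hsub h1
      rw [add_comm, one_nsmul] at h2
      rw [one_nsmul]
      exact h2.symm
    · have hj2 : j + 1 < 0 := by omega
      have hmj : (-j).toNat = (-(j+1)).toNat + 1 := by omega
      set m := (-(j+1)).toNat with hm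
      rw [addZ, addZ, if_neg (by omega), if_neg (by omega), hmj]
      have hle : (m+1) • d ≤ β := hval (m+1)
      have hspec : (m+1) • d + subC hsub β ((m+1) • d) = β := subC_spec hsub hle
      refine subC_eq hsub h0 ?_
      calc m • d + (subC hsub β ((m + 1) • d) + d)
          = m • d + (d + subC hsub β ((m + 1) • d)) := by rw [add_comm (subC hsub β ((m+1) • d)) d]
        _ = (m • d + d) + subC hsub β ((m + 1) • d) := by rw [add_assoc]
        _ = (m+1) • d + subC hsub β ((m + 1) • d) := by rw [succ_nsmul]
        _ = β := hspec

theorem addZ_add_nat (h0 : ∀ x : M, (0:M) ≤ x) {d β : M} {j : ℤ} (hg : Good d β j) (n : ℕ) :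
    addZ hsub d β (j + n) = addZ hsub d β j + n • d := by
  induction n with
  | zero => simp
  | succ n ih =>
    have he : (j + ((n+1:ℕ) : ℤ)) = (j + (n:ℤ)) + 1 := by push_cast; ring
    rw [he, addZ_succ hsub h0 (hg.add_nat n), ih, succ_nsmul, ← add_assoc]

theorem addZ_le (h0 : ∀ x : M, (0:M) ≤ x) {d β : M} (hd : 0 ≤ d) {j j' : ℤ}
    (hg : Good d β j) (h : j ≤ j') :
    addZ hsub d β j ≤ addZ hsub d β j' := by
  have hj' : j' = j + (((j' - j).toNat : ℕ) : ℤ) := by omega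
  rw [hj', addZ_add_nat hsub h0 hg]
  exact le_add_of_nonneg_right (nsmul_nonneg hd _)

theorem addZ_lt (h0 : ∀ x : M, (0:M) ≤ x) {d β : M} (hd : 0 < d) {j j' : ℤ}
    (hg : Good d β j) (h : j < j') :
    addZ hsub d β j < addZ hsub d β j' := by
  have h1 : addZ hsub d β (j + 1) ≤ addZ hsub d β j' := addZ_le hsub h0 hd.le hg.succ (by omega)
  rw [addZ_succ hsub h0 hg] at h1
  exact lt_of_lt_of_le (lt_add_of_pos_right _ hd) h1

theorem addZ_near (h0 : ∀ x : M, (0:M) ≤ x) {d β : M} {j : ℤ} (hg : Good d β j) :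
    near d (addZ hsub d β j) β := by
  rcases le_or_gt 0 j with hj | hj
  · rw [addZ, if_pos hj]
    refine ⟨j.toNat, le_rfl, ?_⟩
    calc β ≤ β + j.toNat • d := le_add_of_nonneg_right (nsmul_nonneg (h0 d) _)
      _ ≤ (β + j.toNat • d) + j.toNat • d := le_add_of_nonneg_right (nsmul_nonneg (h0 d) _)
  · have hval : Valid d β := hg.resolve_left (by omega)
    rw [addZ, if_neg (by omega)]
    set m := (-j).toNat with hm
    have hspec : m • d + subC hsub β (m • d) = β := subC_spec hsub (hval m)
    refine ⟨m, ?_, ?_⟩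
    · have hwβ : subC hsub β (m • d) ≤ β := by
        calc subC hsub β (m • d) ≤ m • d + subC hsub β (m • d) := le_add_of_nonneg_left (h0 _)
          _ = β := hspec
      exact hwβ.trans (le_add_of_nonneg_right (nsmul_nonneg (h0 d) m))
    · refine le_of_eq ?_
      calc β = m • d + subC hsub β (m • d) := hspec.symm
        _ = subC hsub β (m • d) + m • d := add_comm _ _

theorem addZ_uniq (h0 : ∀ x : M, (0:M) ≤ x) {d β : M} (hd : 0 < d) {j j' : ℤ} {s s' : M}
    (hg : Good d β j) (hg' : Good d β j')
    (hs0 : 0 ≤ s) (hs0' : 0 ≤ s') (hs : s < d) (hs' : s' < d)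
    (he : addZ hsub d β j + s = addZ hsub d β j' + s') : j = j' ∧ s = s' := by
  have key : ∀ (i i' : ℤ) (t t' : M), Good d β i → Good d β i' → 0 ≤ t' → t < d →
      addZ hsub d β i + t = addZ hsub d β i' + t' → ¬ i < i' := by
    intro i i' t t' hgi hgi' ht0' htd heq hlt
    have hchain : addZ hsub d β i + t < addZ hsub d β i' + t' := by
      calc addZ hsub d β i + t < addZ hsub d β i + d := add_lt_add_right htd _
        _ = addZ hsub d β (i+1) := (addZ_succ hsub h0 hgi).symm
        _ ≤ addZ hsub d β i' := addZ_le hsub h0 hd.le hgi.succ (by omega)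
        _ ≤ addZ hsub d β i' + t' := le_add_of_nonneg_right ht0'
    exact absurd heq (ne_of_lt hchain)
  rcases lt_trichotomy j j' with h | h | h
  · exact absurd h (key j j' s s' hg hg' hs0' hs he)
  · subst h
    exact ⟨rfl, add_left_cancel he⟩
  · exact absurd h (key j' j s' s hg' hg hs0 hs' he.symm)

theorem decomp (h0 : ∀ x : M, (0:M) ≤ x) {d β x : M} (hd : 0 < d)
    (hn : near d x β) (hb : β ≤ x ∨ Valid d β) :
    ∃ j s, x = addZ hsub d β j + s ∧ 0 ≤ s ∧ s < d ∧ Good d β j := by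
  classical
  by_cases hle : β ≤ x
  · obtain ⟨m, hm1, hm2⟩ := hn
    set P : ℕ → Prop := fun k => β + k • d ≤ x with hP
    have hP0 : P 0 := by simpa [hP] using hle
    obtain ⟨k, hk⟩ : ∃ k, k = Nat.findGreatest P m := ⟨_, rfl⟩
    have hPk : P k := hk ▸ Nat.findGreatest_spec (Nat.zero_le m) hP0
    have hklem : k ≤ m := hk ▸ Nat.findGreatest_le m
    have hub : x < β + (k+1) • d := by
      rcases eq_or_lt_of_le hklem with he | hlt
      · calc x ≤ β + m • d := hm1
          _ < β + m • d + d := lt_add_of_pos_right _ hd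
          _ = β + (k+1) • d := by rw [he, succ_nsmul, ← add_assoc]
      · have hfg : Nat.findGreatest P m < k + 1 := by omega
        have hng : ¬ P (k+1) := Nat.findGreatest_is_greatest hfg (by omega)
        simp only [hP] at hng
        exact not_le.1 hng
    have hsx : β + k • d ≤ x := hPk
    have hspec : (β + k • d) + subC hsub x (β + k • d) = x := subC_spec hsub hsx
    refine ⟨(k : ℤ), subC hsub x (β + k • d), ?_, h0 _, ?_, Or.inl (by omega)⟩
    · rw [addZ_coe]; exact hspec.symm
    · have hlt2 : (β + k • d) + subC hsub x (β + k • d) < (β + k • d) + d := by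
        rw [hspec]
        calc x < β + (k+1) • d := hub
          _ = (β + k • d) + d := by rw [succ_nsmul, ← add_assoc]
      exact lt_of_add_lt_add_left hlt2
  · have hval : Valid d β := hb.resolve_left hle
    push_neg at hle
    obtain ⟨m, hm1, hm2⟩ := hn
    set P : ℕ → Prop := fun k => β ≤ x + k • d with hP
    have hex : ∃ k, P k := ⟨m, hm2⟩
    have hPk : P (Nat.find hex) := Nat.find_spec hex
    have hk0 : Nat.find hex ≠ 0 := by
      intro h
      rw [h] at hPk
      simp only [hP, zero_nsmul, add_zero] at hPk
      exact absurd hPk (not_le.2 hle)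
    obtain ⟨k', hkk⟩ : ∃ k', Nat.find hex = k' + 1 := ⟨Nat.find hex - 1, by omega⟩
    have hPk' : ¬ P k' := Nat.find_min hex (by omega)
    rw [hkk] at hPk
    simp only [hP] at hPk hPk'
    push_neg at hPk'
    have hspec : (k'+1) • d + subC hsub β ((k'+1) • d) = β := subC_spec hsub (hval (k'+1))
    set t := subC hsub β ((k'+1) • d) with ht
    have htx : t ≤ x := by
      have h5 : t + (k'+1) • d ≤ x + (k'+1) • d := by
        rw [add_comm t _, hspec]; exact hPk
      exact le_of_add_le_add_right h5
    have hspec2 : t + subC hsub x t = x := subC_spec hsub htx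
    refine ⟨-((k'+1 : ℕ) : ℤ), subC hsub x t, ?_, h0 _, ?_, Or.inr hval⟩
    · rw [addZ, if_neg (by omega), show ((-(-((k'+1:ℕ):ℤ))).toNat) = k' + 1 by omega]
      exact hspec2.symm
    · have h1 : x + k' • d < β := hPk'
      have h2 : β = (t + d) + k' • d := by
        rw [← hspec, succ_nsmul]
        calc k' • d + d + t = t + (k' • d + d) := add_comm _ _
          _ = t + (d + k' • d) := by rw [add_comm (k' • d) d]
          _ = (t + d) + k' • d := by rw [← add_assoc]
      rw [h2] at h1
      have hxd : x < t + d := lt_of_add_lt_add_right h1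
      have h3 : t + subC hsub x t < t + d := by rw [hspec2]; exact hxd
      exact lt_of_add_lt_add_left h3

end Sub

def galSetoid (a : M) : Setoid M :=
  ⟨near a, ⟨near_refl a, fun h => near_symm h, fun h h' => near_trans h h'⟩⟩

noncomputable def galRep (a : M) (x : M) : M := (Quotient.mk (galSetoid a) x).out

theorem galRep_near (a x : M) : near a (galRep a x) x :=
  Quotient.exact (Quotient.out_eq (Quotient.mk (galSetoid a) x))

theorem galRep_congr {a x y : M} (h : near a x y) : galRep a x = galRep a y :=
  congrArg Quotient.out (Quotient.sound h)

noncomputable def qdr (hdiv : ∀ a b : M, b ≠ 0 → ∃ q r : M, a = b * q + r ∧ r < b)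
    (a p : M) : M × M :=
  if h : a ≠ 0 then ⟨(hdiv p a h).choose, ((hdiv p a h).choose_spec).choose⟩ else (0, 0)

theorem qdr_spec (hdiv : ∀ a b : M, b ≠ 0 → ∃ q r : M, a = b * q + r ∧ r < b)
    {a : M} (ha : a ≠ 0) (p : M) :
    p = a * (qdr hdiv a p).1 + (qdr hdiv a p).2 ∧ (qdr hdiv a p).2 < a := by
  rw [qdr, dif_pos ha]
  exact ((hdiv p a ha).choose_spec).choose_spec

open Classical in
noncomputable def bbase (a c x : M) : M :=
  if near a x 0 then 0 else if near a x (c * a) then c * a else galRep a x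

open Classical in
noncomputable def rbase (hdiv : ∀ a b : M, b ≠ 0 → ∃ q r : M, a = b * q + r ∧ r < b)
    (a b c x : M) : M :=
  if near a x 0 then 0 else if near a x (c * a) then c * b
  else b * (qdr hdiv a (galRep a x)).1

theorem bases_cases (hdiv : ∀ a b : M, b ≠ 0 → ∃ q r : M, a = b * q + r ∧ r < b)
    (a b c x : M) :
    (near a x 0 ∧ bbase a c x = 0 ∧ rbase hdiv a b c x = 0) ∨
    (¬ near a x 0 ∧ near a x (c*a) ∧ bbase a c x = c*a ∧ rbase hdiv a b c x = c*b) ∨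
    (¬ near a x 0 ∧ ¬ near a x (c*a) ∧ bbase a c x = galRep a x ∧
      rbase hdiv a b c x = b * (qdr hdiv a (galRep a x)).1) := by
  unfold bbase rbase
  split_ifs with h1 h2
  · exact Or.inl ⟨h1, rfl, rfl⟩
  · exact Or.inr (Or.inl ⟨h1, h2, rfl, rfl⟩)
  · exact Or.inr (Or.inr ⟨h1, h2, rfl, rfl⟩)

theorem bases_congr (hdiv : ∀ a b : M, b ≠ 0 → ∃ q r : M, a = b * q + r ∧ r < b)
    (a b c : M) {x y : M} (h : near a x y) :
    bbase a c x = bbase a c y ∧ rbase hdiv a b c x = rbase hdiv a b c y := by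
  have e1 : near a x 0 ↔ near a y 0 :=
    ⟨fun h' => near_trans (near_symm h) h', fun h' => near_trans h h'⟩
  have e2 : near a x (c*a) ↔ near a y (c*a) :=
    ⟨fun h' => near_trans (near_symm h) h', fun h' => near_trans h h'⟩
  have e3 : galRep a x = galRep a y := galRep_congr h
  constructor
  · unfold bbase
    by_cases h1 : near a y 0
    · rw [if_pos h1, if_pos (e1.2 h1)]
    · rw [if_neg h1, if_neg (fun hh => h1 (e1.1 hh))]
      by_cases h2 : near a y (c*a)
      · rw [if_pos h2, if_pos (e2.2 h2)]
      · rw [if_neg h2, if_neg (fun hh => h2 (e2.1 hh)), e3]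
  · unfold rbase
    by_cases h1 : near a y 0
    · rw [if_pos h1, if_pos (e1.2 h1)]
    · rw [if_neg h1, if_neg (fun hh => h1 (e1.1 hh))]
      by_cases h2 : near a y (c*a)
      · rw [if_pos h2, if_pos (e2.2 h2)]
      · rw [if_neg h2, if_neg (fun hh => h2 (e2.1 hh)), e3]


theorem valid_of_not_near_zero (h0 : ∀ x : M, (0:M) ≤ x) {d u : M}
    (h : ¬ near d u 0) : Valid d u := by
  intro k
  by_contra hk
  push_neg at hk
  exact h ⟨k, by rw [zero_add]; exact hk.le, (h0 _).trans (le_add_of_nonneg_right (h0 _))⟩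

theorem key (h0 : ∀ x : M, (0:M) ≤ x)
    (hsub : ∀ a b : M, a ≤ b → ∃ c, b = a + c)
    (hdiv : ∀ a b : M, b ≠ 0 → ∃ q r : M, a = b * q + r ∧ r < b)
    {a b c : M} (ha : 0 < a) (hb : 0 < b) (hc : Nonstd c)
    (f : M ≃o M) (hf : f a = b) :
    ∃ F : M ≃o M, F (c * a) = c * b := by
  classical
  -- basic facts about f
  have f0 : f 0 = 0 := by
    have h1 : f 0 ≤ 0 := by
      conv_rhs => rw [← f.apply_symm_apply 0]
      exact f.le_iff_le.2 (h0 _)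
    exact le_antisymm h1 (h0 _)
  have fb : ∀ {s : M}, s < a → f s < b := by
    intro s hs
    rw [← hf]
    exact f.lt_iff_lt.2 hs
  have fb' : ∀ {s : M}, s < b → f.symm s < a := by
    intro s hs
    have h1 : f.symm s < f.symm b := f.symm.lt_iff_lt.2 hs
    rwa [← hf, f.symm_apply_apply] at h1
  have fs : ∀ {s : M}, s < b → f (f.symm s) = s := fun {s} _ => f.apply_symm_apply s
  -- nonstandardness of c
  have hvalca : Valid a (c*a) := by
    intro k
    rw [nsmul_eq_mul]
    exact mul_le_mul_of_nonneg_right (hc k).le ha.le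
  have hvalcb : Valid b (c*b) := by
    intro k
    rw [nsmul_eq_mul]
    exact mul_le_mul_of_nonneg_right (hc k).le hb.le
  have hnbca : ¬ near a (c*a) 0 := not_near_zero_of_valid ha hvalca
  have hnbcb : ¬ near b (c*b) 0 := not_near_zero_of_valid hb hvalcb
  -- bases are near
  have hnear : ∀ x : M, near a x (bbase a c x) := by
    intro x
    rcases bases_cases hdiv a b c x with ⟨h1, e, _⟩ | ⟨_, h2, e, _⟩ | ⟨_, _, e, _⟩ <;> rw [e]
    · exact h1
    · exact h2
    · exact near_symm (galRep_near a x)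
  have hbval : ∀ x : M, bbase a c x ≤ x ∨ Valid a (bbase a c x) := by
    intro x
    rcases bases_cases hdiv a b c x with ⟨h1, e, _⟩ | ⟨_, _, e, _⟩ | ⟨h1, _, e, _⟩ <;> rw [e]
    · exact Or.inl (h0 x)
    · exact Or.inr hvalca
    · refine Or.inr (valid_of_not_near_zero h0 ?_)
      intro hg
      exact h1 (near_trans (near_symm (galRep_near a x)) hg)
  -- validity of target bases
  have hvalR : ∀ x : M, ¬ near a x 0 → Valid b (rbase hdiv a b c x) := by
    intro x hx0
    rcases bases_cases hdiv a b c x with ⟨h1, _, _⟩ | ⟨_, _, _, e⟩ | ⟨h1, _, _, e⟩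
    · exact absurd h1 hx0
    · rw [e]; exact hvalcb
    · rw [e]
      have hgr : ¬ near a (galRep a x) 0 := by
        intro hg
        exact h1 (near_trans (near_symm (galRep_near a x)) hg)
      have hvg : Valid a (galRep a x) := valid_of_not_near_zero h0 hgr
      obtain ⟨hq, hr⟩ := qdr_spec hdiv ha.ne' (galRep a x)
      intro k
      have h2 : (k+1) • a ≤ a * (qdr hdiv a (galRep a x)).1 + (qdr hdiv a (galRep a x)).2 :=
        hq ▸ hvg (k+1)
      have h3 : (k+1) • a < a * (qdr hdiv a (galRep a x)).1 + a :=
        lt_of_le_of_lt h2 (add_lt_add_right hr _)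
      have h4 : ((k:M)) * a + a < a * (qdr hdiv a (galRep a x)).1 + a := by
        calc ((k:M)) * a + a = (k+1) • a := by rw [nsmul_eq_mul]; push_cast; ring
          _ < _ := h3
      have h5 : (k:M) * a < a * (qdr hdiv a (galRep a x)).1 := lt_of_add_lt_add_right h4
      have h6 : (k:M) < (qdr hdiv a (galRep a x)).1 := by
        refine lt_of_mul_lt_mul_right ?_ ha.le
        rwa [mul_comm (qdr hdiv a (galRep a x)).1 a]
      rw [nsmul_eq_mul]
      calc (k:M) * b ≤ (qdr hdiv a (galRep a x)).1 * b :=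
            mul_le_mul_of_nonneg_right h6.le hb.le
        _ = b * (qdr hdiv a (galRep a x)).1 := mul_comm _ _
  -- representation of target bases
  have hrep : ∀ x : M, ¬ near a x 0 → ∃ u qu ru, near a x u ∧ u = a * qu + ru ∧ ru < a ∧
      rbase hdiv a b c x = b * qu := by
    intro x hx0
    rcases bases_cases hdiv a b c x with ⟨h1, _, _⟩ | ⟨_, h2, _, e⟩ | ⟨h1, _, _, e⟩
    · exact absurd h1 hx0
    · exact ⟨c*a, c, 0, h2, by rw [add_zero, mul_comm], ha, by rw [e, mul_comm]⟩
    · obtain ⟨hq, hr⟩ := qdr_spec hdiv ha.ne' (galRep a x)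
      exact ⟨galRep a x, (qdr hdiv a (galRep a x)).1, (qdr hdiv a (galRep a x)).2,
        near_symm (galRep_near a x), hq, hr, e⟩
  -- separation between distinct galaxies
  have sep : ∀ {x y : M}, x < y → ¬ near a x y → ∀ k : ℕ, x + k • a ≤ y := by
    intro x y hxy hn k
    by_contra hk
    push_neg at hk
    exact hn ⟨k, hxy.le.trans (le_add_of_nonneg_right (h0 _)), hk.le⟩
  have transk : ∀ {x x' y y' : M}, near a x' x → near a y' y → (∀ k : ℕ, x + k • a ≤ y) →
      ∀ k : ℕ, x' + k • a ≤ y' := by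
    intro x x' y y' hx' hy' hxy k
    obtain ⟨m1, hx1, _⟩ := hx'
    obtain ⟨m2, _, hy2⟩ := hy'
    have h1 : x' + k • a ≤ x + (m1 + k) • a := by
      calc x' + k • a ≤ (x + m1 • a) + k • a := add_le_add_left hx1 _
        _ = x + (m1 + k) • a := by rw [add_nsmul, add_assoc]
    have h2 : (x + (m1 + k) • a) + m2 • a ≤ y' + m2 • a := by
      calc (x + (m1 + k) • a) + m2 • a = x + (m1 + k + m2) • a := by
            rw [add_nsmul a (m1+k) m2, add_assoc]
        _ ≤ y := hxy _
        _ ≤ y' + m2 • a := hy2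
    exact h1.trans (le_of_add_le_add_right h2)
  -- quotient comparison
  have qcmp : ∀ (u v qu ru qv rv : M), (∀ k : ℕ, u + k • a ≤ v) → u = a * qu + ru →
      v = a * qv + rv → rv < a → ∀ m : ℕ, b * qu + m • b ≤ b * qv := by
    intro u v qu ru qv rv hk hu hv hrv m
    have h1 : u + (m+2) • a ≤ v := hk (m+2)
    rw [hu, hv] at h1
    have h2 : a * qu + (m+2) • a ≤ a * qv + rv := by
      calc a * qu + (m+2) • a ≤ (a * qu + ru) + (m+2) • a := by
            refine add_le_add_left ?_ _
            exact le_add_of_nonneg_right (h0 ru)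
        _ ≤ a * qv + rv := h1
    have h3 : a * qu + (m+2) • a < a * qv + a := lt_of_le_of_lt h2 (add_lt_add_right hrv _)
    have h4 : (a * qu + (m+1) • a) + a < a * qv + a := by
      rw [add_assoc, ← succ_nsmul]
      exact h3
    have h5 : a * qu + (m+1) • a < a * qv := lt_of_add_lt_add_right h4
    have h6 : a * (qu + ((m+1 : ℕ) : M)) < a * qv := by
      rw [mul_add, mul_comm a ((m+1:ℕ):M), ← nsmul_eq_mul]
      exact h5
    have h7 : qu + ((m+1:ℕ):M) < qv := lt_of_mul_lt_mul_left h6 ha.le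
    have h8 : b * (qu + ((m+1:ℕ):M)) < b * qv := mul_lt_mul_of_pos_left h7 hb
    have h9 : b * qu + (m+1) • b < b * qv := by
      rw [mul_add, mul_comm b ((m+1:ℕ):M), ← nsmul_eq_mul] at h8
      exact h8
    calc b * qu + m • b ≤ b * qu + (m+1) • b := by
          refine add_le_add_right ?_ _
          rw [succ_nsmul]
          exact le_add_of_nonneg_right (h0 b)
      _ ≤ b * qv := h9.le
  -- the key cross-galaxy estimate
  have cross : ∀ {x y : M}, x < y → ¬ near a x y → ∀ m : ℕ,
      rbase hdiv a b c x + m • b ≤ rbase hdiv a b c y := by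
    intro x y hxy hn m
    have hky : ∀ k : ℕ, x + k • a ≤ y := sep hxy hn
    by_cases hx0 : near a x 0
    · have hy0 : ¬ near a y 0 := by
        intro h
        exact hn (near_trans hx0 (near_symm h))
      have ex : rbase hdiv a b c x = 0 := by
        rcases bases_cases hdiv a b c x with ⟨_, _, e⟩ | ⟨h1, _, _, _⟩ | ⟨h1, _, _, _⟩
        · exact e
        · exact absurd hx0 h1
        · exact absurd hx0 h1
      rw [ex, zero_add]
      exact hvalR y hy0 m
    · have hy0 : ¬ near a y 0 := by
        intro h
        obtain ⟨k, hk1, _⟩ := h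
        exact hx0 ⟨k, hxy.le.trans hk1, (h0 _).trans (le_add_of_nonneg_right (h0 _))⟩
      obtain ⟨u, qu, ru, hxu, hu, _, hrx⟩ := hrep x hx0
      obtain ⟨v, qv, rv, hyv, hv, hrv, hry⟩ := hrep y hy0
      have hk' : ∀ k : ℕ, u + k • a ≤ v := transk (near_symm hxu) (near_symm hyv) hky
      rw [hrx, hry]
      exact qcmp u v qu ru qv rv hk' hu hv hrv m
  -- choose decompositions
  have hdec : ∀ x : M, ∃ j : ℤ, ∃ s : M, x = addZ hsub a (bbase a c x) j + s ∧ 0 ≤ s ∧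
      s < a ∧ Good a (bbase a c x) j := by
    intro x
    exact decomp hsub h0 ha (hnear x) (hbval x)
  choose J S hJS1 hJS2 hJS3 hJS4 using hdec
  have goodR : ∀ x : M, Good b (rbase hdiv a b c x) (J x) := by
    intro x
    rcases hJS4 x with hj | hval
    · exact Or.inl hj
    · refine Or.inr (hvalR x ?_)
      intro hx0
      have e : bbase a c x = 0 := by
        rcases bases_cases hdiv a b c x with ⟨_, e, _⟩ | ⟨h1, _, _, _⟩ | ⟨h1, _, _, _⟩
        · exact e
        · exact absurd hx0 h1
        · exact absurd hx0 h1
      have h1 : (1:ℕ) • a ≤ (0:M) := by rw [← e]; exact hval 1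
      rw [one_nsmul] at h1
      exact absurd h1 (not_le.2 ha)
  -- the map
  set Phi : M → M := fun x => addZ hsub b (rbase hdiv a b c x) (J x) + f (S x) with hPhi
  -- strict monotonicity
  have hmono : StrictMono Phi := by
    intro x y hxy
    by_cases hn : near a x y
    · obtain ⟨hbeq, hreq⟩ := bases_congr hdiv a b c hn
      rcases lt_trichotomy (J x) (J y) with hj | hj | hj
      · calc Phi x = addZ hsub b (rbase hdiv a b c x) (J x) + f (S x) := rfl
          _ < addZ hsub b (rbase hdiv a b c x) (J x) + b := add_lt_add_right (fb (hJS3 x)) _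
          _ = addZ hsub b (rbase hdiv a b c x) (J x + 1) := (addZ_succ hsub h0 (goodR x)).symm
          _ ≤ addZ hsub b (rbase hdiv a b c x) (J y) :=
              addZ_le hsub h0 hb.le (goodR x).succ (by omega)
          _ = addZ hsub b (rbase hdiv a b c y) (J y) := by rw [hreq]
          _ ≤ Phi y := le_add_of_nonneg_right (h0 _)
      · have hSlt : S x < S y := by
          have h1 : addZ hsub a (bbase a c x) (J x) + S x
              < addZ hsub a (bbase a c x) (J x) + S y := by
            calc addZ hsub a (bbase a c x) (J x) + S x = x := (hJS1 x).symm
              _ < y := hxy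
              _ = addZ hsub a (bbase a c y) (J y) + S y := hJS1 y
              _ = addZ hsub a (bbase a c x) (J x) + S y := by rw [← hbeq, ← hj]
          exact lt_of_add_lt_add_left h1
        calc Phi x = addZ hsub b (rbase hdiv a b c x) (J x) + f (S x) := rfl
          _ < addZ hsub b (rbase hdiv a b c x) (J x) + f (S y) :=
              add_lt_add_right (f.lt_iff_lt.2 hSlt) _
          _ = addZ hsub b (rbase hdiv a b c y) (J y) + f (S y) := by rw [hreq, hj]
          _ = Phi y := rfl
      · exfalso
        have h1 : y < x := by
          calc y = addZ hsub a (bbase a c y) (J y) + S y := hJS1 y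
            _ < addZ hsub a (bbase a c y) (J y) + a := add_lt_add_right (hJS3 y) _
            _ = addZ hsub a (bbase a c y) (J y + 1) := (addZ_succ hsub h0 (hJS4 y)).symm
            _ ≤ addZ hsub a (bbase a c y) (J x) :=
                addZ_le hsub h0 ha.le (hJS4 y).succ (by omega)
            _ = addZ hsub a (bbase a c x) (J x) := by rw [hbeq]
            _ ≤ addZ hsub a (bbase a c x) (J x) + S x := le_add_of_nonneg_right (hJS2 x)
            _ = x := (hJS1 x).symm
        exact absurd hxy (not_lt.2 h1.le)
    · have hcr := cross hxy hn
      have hub : Phi x < rbase hdiv a b c x + ((J x).toNat + 1) • b := by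
        rcases le_or_gt 0 (J x) with hjx | hjx
        · have he : addZ hsub b (rbase hdiv a b c x) (J x)
              = rbase hdiv a b c x + (J x).toNat • b := by
            rw [addZ, if_pos hjx]
          calc Phi x = addZ hsub b (rbase hdiv a b c x) (J x) + f (S x) := rfl
            _ < addZ hsub b (rbase hdiv a b c x) (J x) + b := add_lt_add_right (fb (hJS3 x)) _
            _ = rbase hdiv a b c x + (J x).toNat • b + b := by rw [he]
            _ = rbase hdiv a b c x + ((J x).toNat + 1) • b := by rw [succ_nsmul, ← add_assoc]
        · have h1 : addZ hsub b (rbase hdiv a b c x) (J x) ≤ rbase hdiv a b c x := by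
            have h2 := addZ_le hsub h0 hb.le (goodR x) (show J x ≤ 0 by omega)
            rwa [addZ_zero] at h2
          calc Phi x = addZ hsub b (rbase hdiv a b c x) (J x) + f (S x) := rfl
            _ ≤ rbase hdiv a b c x + f (S x) := add_le_add_left h1 _
            _ < rbase hdiv a b c x + b := add_lt_add_right (fb (hJS3 x)) _
            _ = rbase hdiv a b c x + ((J x).toNat + 1) • b := by
                rw [show (J x).toNat = 0 by omega, zero_add, one_nsmul]
      rcases le_or_gt 0 (J y) with hjy | hjy
      · have h2 : rbase hdiv a b c y ≤ addZ hsub b (rbase hdiv a b c y) (J y) := by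
          have h3 := addZ_le hsub h0 hb.le (Or.inl le_rfl : Good b (rbase hdiv a b c y) 0) hjy
          rwa [addZ_zero] at h3
        calc Phi x < rbase hdiv a b c x + ((J x).toNat + 1) • b := hub
          _ ≤ rbase hdiv a b c y := hcr _
          _ ≤ addZ hsub b (rbase hdiv a b c y) (J y) := h2
          _ ≤ Phi y := le_add_of_nonneg_right (h0 _)
      · have hvy : Valid b (rbase hdiv a b c y) := (goodR y).resolve_left (by omega)
        have haz : addZ hsub b (rbase hdiv a b c y) (J y)
            = subC hsub (rbase hdiv a b c y) ((-(J y)).toNat • b) := by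
          rw [addZ, if_neg (by omega)]
        have hsp : (-(J y)).toNat • b + subC hsub (rbase hdiv a b c y) ((-(J y)).toNat • b)
            = rbase hdiv a b c y := subC_spec hsub (hvy _)
        have h4 : (rbase hdiv a b c x + ((J x).toNat + 1) • b) + (-(J y)).toNat • b
            ≤ subC hsub (rbase hdiv a b c y) ((-(J y)).toNat • b) + (-(J y)).toNat • b := by
          calc (rbase hdiv a b c x + ((J x).toNat + 1) • b) + (-(J y)).toNat • b
              = rbase hdiv a b c x + ((J x).toNat + 1 + (-(J y)).toNat) • b := by
                rw [add_nsmul b ((J x).toNat + 1) ((-(J y)).toNat), add_assoc]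
            _ ≤ rbase hdiv a b c y := hcr _
            _ = (-(J y)).toNat • b + subC hsub (rbase hdiv a b c y) ((-(J y)).toNat • b) :=
                hsp.symm
            _ = subC hsub (rbase hdiv a b c y) ((-(J y)).toNat • b) + (-(J y)).toNat • b :=
                add_comm _ _
        have h5 : rbase hdiv a b c x + ((J x).toNat + 1) • b
            ≤ subC hsub (rbase hdiv a b c y) ((-(J y)).toNat • b) := le_of_add_le_add_right h4
        calc Phi x < rbase hdiv a b c x + ((J x).toNat + 1) • b := hub
          _ ≤ subC hsub (rbase hdiv a b c y) ((-(J y)).toNat • b) := h5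
          _ = addZ hsub b (rbase hdiv a b c y) (J y) := haz.symm
          _ ≤ Phi y := le_add_of_nonneg_right (h0 _)
  -- surjectivity
  have hsurj : Function.Surjective Phi := by
    intro y
    by_cases hy0 : near b y 0
    · obtain ⟨j', s', hy1, hy2, hy3, hy4⟩ := decomp hsub h0 hb hy0 (Or.inl (h0 y))
      have hj'0 : (0:ℤ) ≤ j' := by
        rcases hy4 with h | h
        · exact h
        · exfalso
          have h1 : (1:ℕ) • b ≤ (0:M) := h 1
          rw [one_nsmul] at h1
          exact absurd h1 (not_le.2 hb)
      have hfsa : f.symm s' < a := fb' hy3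
      set x := addZ hsub a 0 j' + f.symm s' with hx
      have hxbot : near a x 0 := by
        refine ⟨j'.toNat + 1, ?_, (h0 _).trans (le_add_of_nonneg_right (h0 _))⟩
        rw [zero_add]
        calc x = addZ hsub a 0 j' + f.symm s' := hx
          _ = (0 + j'.toNat • a) + f.symm s' := by rw [addZ, if_pos hj'0]
          _ ≤ (0 + j'.toNat • a) + a := add_le_add_right hfsa.le _
          _ = (j'.toNat + 1) • a := by rw [zero_add, succ_nsmul]
      have hbx : bbase a c x = 0 ∧ rbase hdiv a b c x = 0 := by
        rcases bases_cases hdiv a b c x with ⟨_, e1, e2⟩ | ⟨h1, _, _, _⟩ | ⟨h1, _, _, _⟩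
        · exact ⟨e1, e2⟩
        · exact absurd hxbot h1
        · exact absurd hxbot h1
      have hdx : x = addZ hsub a (bbase a c x) j' + f.symm s' := by rw [hbx.1]
      have huq := addZ_uniq hsub h0 ha (hJS4 x)
        (show Good a (bbase a c x) j' from Or.inl hj'0)
        (hJS2 x) (h0 _) (hJS3 x) hfsa ((hJS1 x).symm.trans hdx)
      refine ⟨x, ?_⟩
      calc Phi x = addZ hsub b (rbase hdiv a b c x) (J x) + f (S x) := rfl
        _ = addZ hsub b 0 j' + f (f.symm s') := by rw [hbx.2, huq.1, huq.2]
        _ = addZ hsub b 0 j' + s' := by rw [f.apply_symm_apply]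
        _ = y := hy1.symm
    · by_cases hyc : near b y (c*b)
      · obtain ⟨j', s', hy1, hy2, hy3, _⟩ := decomp hsub h0 hb hyc (Or.inr hvalcb)
        have hfsa : f.symm s' < a := fb' hy3
        have hgood : Good a (c*a) j' := Or.inr hvalca
        set x := addZ hsub a (c*a) j' + f.symm s' with hx
        have hxnca : near a x (c*a) := by
          refine near_trans ?_ (addZ_near hsub h0 hgood)
          exact ⟨1, by rw [one_nsmul]; exact add_le_add_right hfsa.le _,
            (le_add_of_nonneg_right (h0 _)).trans (le_add_of_nonneg_right (h0 _))⟩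
        have hxn0 : ¬ near a x 0 := by
          intro h
          exact hnbca (near_trans (near_symm hxnca) h)
        have hbx : bbase a c x = c*a ∧ rbase hdiv a b c x = c*b := by
          rcases bases_cases hdiv a b c x with ⟨h1, _, _⟩ | ⟨_, _, e1, e2⟩ | ⟨_, h2, _, _⟩
          · exact absurd h1 hxn0
          · exact ⟨e1, e2⟩
          · exact absurd hxnca h2
        have hdx : x = addZ hsub a (bbase a c x) j' + f.symm s' := by rw [hbx.1]
        have huq := addZ_uniq hsub h0 ha (hJS4 x)
          (show Good a (bbase a c x) j' from hbx.1 ▸ hgood)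
          (hJS2 x) (h0 _) (hJS3 x) hfsa ((hJS1 x).symm.trans hdx)
        refine ⟨x, ?_⟩
        calc Phi x = addZ hsub b (rbase hdiv a b c x) (J x) + f (S x) := rfl
          _ = addZ hsub b (c*b) j' + f (f.symm s') := by rw [hbx.2, huq.1, huq.2]
          _ = addZ hsub b (c*b) j' + s' := by rw [f.apply_symm_apply]
          _ = y := hy1.symm
      · obtain ⟨hqy, hry⟩ := qdr_spec hdiv hb.ne' y
        have hvy : Valid b y := valid_of_not_near_zero h0 hy0
        have hbqy : b * (qdr hdiv b y).1 ≤ y := by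
          conv_rhs => rw [hqy]
          exact le_add_of_nonneg_right (h0 _)
        have hkqy : ∀ k : ℕ, (k:M) < (qdr hdiv b y).1 := by
          intro k
          have h1 : (k+1) • b ≤ y := hvy (k+1)
          rw [hqy] at h1
          have h2 : (k+1) • b < b * (qdr hdiv b y).1 + b :=
            lt_of_le_of_lt h1 (add_lt_add_right hry _)
          have h3 : ((k:M) + 1) * b < ((qdr hdiv b y).1 + 1) * b := by
            calc ((k:M)+1) * b = (k+1) • b := by rw [nsmul_eq_mul]; push_cast; ring
              _ < b * (qdr hdiv b y).1 + b := h2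
              _ = ((qdr hdiv b y).1 + 1) * b := by ring
          have h4 : (k:M) + 1 < (qdr hdiv b y).1 + 1 := lt_of_mul_lt_mul_right h3 hb.le
          exact lt_of_add_lt_add_right h4
        have hvz : Valid a (a * (qdr hdiv b y).1) := by
          intro k
          rw [nsmul_eq_mul]
          calc (k:M) * a ≤ (qdr hdiv b y).1 * a :=
                mul_le_mul_of_nonneg_right (hkqy k).le ha.le
            _ = a * (qdr hdiv b y).1 := mul_comm _ _
        have hzn0 : ¬ near a (a * (qdr hdiv b y).1) 0 := not_near_zero_of_valid ha hvz
        have hznca : ¬ near a (a * (qdr hdiv b y).1) (c*a) := by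
          intro hzc
          obtain ⟨k, hz1, hz2⟩ := hzc
          have e1 : (qdr hdiv b y).1 ≤ c + (k:M) := by
            refine le_of_mul_le_mul_left ?_ ha
            calc a * (qdr hdiv b y).1 ≤ c*a + k • a := hz1
              _ = a * (c + (k:M)) := by rw [nsmul_eq_mul]; ring
          have e2 : c ≤ (qdr hdiv b y).1 + (k:M) := by
            refine le_of_mul_le_mul_left ?_ ha
            calc a * c = c * a := mul_comm _ _
              _ ≤ a * (qdr hdiv b y).1 + k • a := hz2
              _ = a * ((qdr hdiv b y).1 + (k:M)) := by rw [nsmul_eq_mul]; ring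
          refine hyc (near_intro h0 (k := k+1) (l := k) ?_ ?_)
          · calc y = b * (qdr hdiv b y).1 + (qdr hdiv b y).2 := hqy
              _ ≤ b * (qdr hdiv b y).1 + b := add_le_add_right hry.le _
              _ ≤ b * (c + (k:M)) + b :=
                  add_le_add_left (mul_le_mul_of_nonneg_left e1 hb.le) _
              _ = c * b + (k+1) • b := by rw [nsmul_eq_mul]; push_cast; ring
          · calc c * b = b * c := mul_comm _ _
              _ ≤ b * ((qdr hdiv b y).1 + (k:M)) := mul_le_mul_of_nonneg_left e2 hb.le
              _ = b * (qdr hdiv b y).1 + (k:M) * b := by ring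
              _ ≤ y + k • b := by
                  rw [nsmul_eq_mul]
                  exact add_le_add_left hbqy _
        have hβz : near a (galRep a (a * (qdr hdiv b y).1)) (a * (qdr hdiv b y).1) :=
          galRep_near a _
        obtain ⟨hqβ, hrβ⟩ := qdr_spec hdiv ha.ne' (galRep a (a * (qdr hdiv b y).1))
        have hbz : bbase a c (a * (qdr hdiv b y).1) = galRep a (a * (qdr hdiv b y).1) ∧
            rbase hdiv a b c (a * (qdr hdiv b y).1)
              = b * (qdr hdiv a (galRep a (a * (qdr hdiv b y).1))).1 := by
          rcases bases_cases hdiv a b c (a * (qdr hdiv b y).1) with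
            ⟨h1, _, _⟩ | ⟨_, h2, _, _⟩ | ⟨_, _, e1, e2⟩
          · exact absurd h1 hzn0
          · exact absurd h2 hznca
          · exact ⟨e1, e2⟩
        have hvP : Valid b (b * (qdr hdiv a (galRep a (a * (qdr hdiv b y).1))).1) :=
          hbz.2 ▸ hvalR _ hzn0
        have hyP : near b y (b * (qdr hdiv a (galRep a (a * (qdr hdiv b y).1))).1) := by
          obtain ⟨k, hβ1, hβ2⟩ := hβz
          have hq1 : (qdr hdiv a (galRep a (a * (qdr hdiv b y).1))).1
              ≤ (qdr hdiv b y).1 + (k:M) := by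
            refine le_of_mul_le_mul_left ?_ ha
            calc a * (qdr hdiv a (galRep a (a * (qdr hdiv b y).1))).1
                ≤ galRep a (a * (qdr hdiv b y).1) := by
                  conv_rhs => rw [hqβ]
                  exact le_add_of_nonneg_right (h0 _)
              _ ≤ a * (qdr hdiv b y).1 + k • a := hβ1
              _ = a * ((qdr hdiv b y).1 + (k:M)) := by rw [nsmul_eq_mul]; ring
          have hq2 : (qdr hdiv b y).1
              ≤ (qdr hdiv a (galRep a (a * (qdr hdiv b y).1))).1 + ((k:M) + 1) := by
            have h1 : a * (qdr hdiv b y).1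
                < a * ((qdr hdiv a (galRep a (a * (qdr hdiv b y).1))).1 + ((k:M)+1)) := by
              calc a * (qdr hdiv b y).1 ≤ galRep a (a * (qdr hdiv b y).1) + k • a := hβ2
                _ = a * (qdr hdiv a (galRep a (a * (qdr hdiv b y).1))).1
                    + (qdr hdiv a (galRep a (a * (qdr hdiv b y).1))).2 + k • a := by
                      rw [← hqβ]
                _ < a * (qdr hdiv a (galRep a (a * (qdr hdiv b y).1))).1 + a + k • a := by
                      exact add_lt_add_left (add_lt_add_right hrβ _) _
                _ = a * ((qdr hdiv a (galRep a (a * (qdr hdiv b y).1))).1 + ((k:M)+1)) := by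
                      rw [nsmul_eq_mul]; ring
            exact (lt_of_mul_lt_mul_left h1 ha.le).le
          refine near_intro h0 (k := k+2) (l := k) ?_ ?_
          · calc y = b * (qdr hdiv b y).1 + (qdr hdiv b y).2 := hqy
              _ ≤ b * (qdr hdiv b y).1 + b := add_le_add_right hry.le _
              _ ≤ b * ((qdr hdiv a (galRep a (a * (qdr hdiv b y).1))).1 + ((k:M)+1)) + b :=
                  add_le_add_left (mul_le_mul_of_nonneg_left hq2 hb.le) _
              _ = b * (qdr hdiv a (galRep a (a * (qdr hdiv b y).1))).1 + (k+2) • b := by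
                  rw [nsmul_eq_mul]; push_cast; ring
          · calc b * (qdr hdiv a (galRep a (a * (qdr hdiv b y).1))).1
                ≤ b * ((qdr hdiv b y).1 + (k:M)) := mul_le_mul_of_nonneg_left hq1 hb.le
              _ = b * (qdr hdiv b y).1 + (k:M) * b := by ring
              _ ≤ y + k • b := by
                  rw [nsmul_eq_mul]
                  exact add_le_add_left hbqy _
        obtain ⟨j', s', hy1, hy2, hy3, _⟩ := decomp hsub h0 hb hyP (Or.inr hvP)
        have hfsa : f.symm s' < a := fb' hy3
        have hvβ : Valid a (galRep a (a * (qdr hdiv b y).1)) :=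
          valid_of_not_near_zero h0 (fun h => hzn0 (near_trans (near_symm hβz) h))
        have hgood : Good a (galRep a (a * (qdr hdiv b y).1)) j' := Or.inr hvβ
        set x := addZ hsub a (galRep a (a * (qdr hdiv b y).1)) j' + f.symm s' with hx
        have hxβ : near a x (galRep a (a * (qdr hdiv b y).1)) := by
          refine near_trans ?_ (addZ_near hsub h0 hgood)
          exact ⟨1, by rw [one_nsmul]; exact add_le_add_right hfsa.le _,
            (le_add_of_nonneg_right (h0 _)).trans (le_add_of_nonneg_right (h0 _))⟩
        have hxz : near a x (a * (qdr hdiv b y).1) := near_trans hxβ hβz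
        have hxn0 : ¬ near a x 0 := fun h => hzn0 (near_trans (near_symm hxz) h)
        have hxnca : ¬ near a x (c*a) := fun h => hznca (near_trans (near_symm hxz) h)
        have hgx : galRep a x = galRep a (a * (qdr hdiv b y).1) := galRep_congr hxz
        have hbx : bbase a c x = galRep a (a * (qdr hdiv b y).1) ∧
            rbase hdiv a b c x = b * (qdr hdiv a (galRep a (a * (qdr hdiv b y).1))).1 := by
          rcases bases_cases hdiv a b c x with ⟨h1, _, _⟩ | ⟨_, h2, _, _⟩ | ⟨_, _, e1, e2⟩
          · exact absurd h1 hxn0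
          · exact absurd h2 hxnca
          · rw [hgx] at e1 e2
            exact ⟨e1, e2⟩
        have hdx : x = addZ hsub a (bbase a c x) j' + f.symm s' := by rw [hbx.1]
        have huq := addZ_uniq hsub h0 ha (hJS4 x)
          (show Good a (bbase a c x) j' from hbx.1 ▸ hgood)
          (hJS2 x) (h0 _) (hJS3 x) hfsa ((hJS1 x).symm.trans hdx)
        refine ⟨x, ?_⟩
        calc Phi x = addZ hsub b (rbase hdiv a b c x) (J x) + f (S x) := rfl
          _ = addZ hsub b (b * (qdr hdiv a (galRep a (a * (qdr hdiv b y).1))).1) j'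
              + f (f.symm s') := by rw [hbx.2, huq.1, huq.2]
          _ = addZ hsub b (b * (qdr hdiv a (galRep a (a * (qdr hdiv b y).1))).1) j' + s' := by
              rw [f.apply_symm_apply]
          _ = y := hy1.symm
  -- the value at c * a
  have hca : Phi (c*a) = c*b := by
    have hbx : bbase a c (c*a) = c*a ∧ rbase hdiv a b c (c*a) = c*b := by
      rcases bases_cases hdiv a b c (c*a) with ⟨h1, _, _⟩ | ⟨_, _, e1, e2⟩ | ⟨_, h2, _, _⟩
      · exact absurd h1 hnbca
      · exact ⟨e1, e2⟩
      · exact absurd (near_refl a (c*a)) h2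
    have hdx : c*a = addZ hsub a (bbase a c (c*a)) 0 + 0 := by
      rw [hbx.1, addZ_zero, add_zero]
    have huq := addZ_uniq hsub h0 ha (hJS4 (c*a))
      (show Good a (bbase a c (c*a)) 0 from Or.inl le_rfl)
      (hJS2 (c*a)) le_rfl (hJS3 (c*a)) ha ((hJS1 (c*a)).symm.trans hdx)
    calc Phi (c*a) = addZ hsub b (rbase hdiv a b c (c*a)) (J (c*a)) + f (S (c*a)) := rfl
      _ = addZ hsub b (c*b) 0 + f 0 := by rw [hbx.2, huq.1, huq.2]
      _ = c*b := by rw [addZ_zero, f0, add_zero]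
  exact ⟨{ toEquiv := Equiv.ofBijective Phi ⟨hmono.injective, hsurj⟩,
           map_rel_iff' := hmono.le_iff_le }, hca⟩

end E5MulAux

/-- `E⁵` is preserved under multiplication of nonstandard elements. -/
theorem E5_mul {M : Type*} [CommSemiring M] [LinearOrder M] [IsStrictOrderedRing M]
    (h0 : ∀ x : M, 0 ≤ x)
    (hsub : ∀ a b : M, a ≤ b → ∃ c, b = a + c)
    (hdiv : ∀ a b : M, b ≠ 0 → ∃ q r : M, a = b * q + r ∧ r < b)
    (a₁ a₂ b₁ b₂ : M) (ha₁ : Nonstd a₁) (ha₂ : Nonstd a₂)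
    (hb₁ : Nonstd b₁) (hb₂ : Nonstd b₂)
    (h₁ : E5 a₁ b₁) (h₂ : E5 a₂ b₂) :
    E5 (a₁ * a₂) (b₁ * b₂) := by
  obtain ⟨f, hf⟩ := h₁
  obtain ⟨g, hg⟩ := h₂
  have posa1 : (0:M) < a₁ := by simpa using ha₁ 0
  have posa2 : (0:M) < a₂ := by simpa using ha₂ 0
  have posb1 : (0:M) < b₁ := by simpa using hb₁ 0
  have posb2 : (0:M) < b₂ := by simpa using hb₂ 0
  obtain ⟨F, hF⟩ := E5MulAux.key h0 hsub hdiv posa2 posb2 ha₁ g hg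
  obtain ⟨G, hG⟩ := E5MulAux.key h0 hsub hdiv posa1 posb1 hb₂ f hf
  refine ⟨F.trans G, ?_⟩
  have htr : (F.trans G) (a₁ * a₂) = G (F (a₁ * a₂)) := rfl
  rw [htr, hF, mul_comm a₁ b₂, hG, mul_comm b₂ b₁]
end
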